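/- arXiv:2107.00944 — 6 statements merged into one kernel-verified Lean document; each statement's English description precedes it below -/
import Mathlib

section
/- Let D be a commutative Noetherian ring, a ∈ D, and A = D[X,Y]/(XY - a). If P is a minimal prime of A, then P ∩ D is a minimal prime of D. -/
open MvPolynomial

/-- The commutative generalized Weyl algebra of rank 1: `A = D[X,Y]/(XY - a)`. -/
noncomputable abbrev GWA (D : Type*) [CommRing D] (a : D) : Type _ :=
  MvPolynomial (Fin 2) D ⧸ (Ideal.span {X 0 * X 1 - C a} : Ideal (MvPolynomial (Fin 2) D))

/-- `X n` is a non-zero-divisor in any multivariate polynomial ring. -/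
lemma gwa_aux_X_regular {σ : Type*} {S : Type*} [CommRing S] (n : σ)
    {p : MvPolynomial σ S} (h : p * X n = 0) : p = 0 := by
  ext m
  have := congrArg (coeff (m + Finsupp.single n 1)) h
  rwa [coeff_mul_X, coeff_zero] at this

/-- `X 0 * X 1 - C c` is a non-zero-divisor in `S[X,Y]` for any commutative ring `S`. -/
lemma gwa_aux_f_regular {S : Type*} [CommRing S] (c : S)
    {g : MvPolynomial (Fin 2) S} (h : g * (X 0 * X 1 - C c) = 0) : g = 0 := by
  rcases subsingleton_or_nontrivial S with hS | hS
  · exact Subsingleton.elim _ _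
  set e := MvPolynomial.finSuccEquiv S 1 with he
  have hF : e (X 0 * X 1 - C c) =
      Polynomial.C (X 0) * Polynomial.X + Polynomial.C (-(C c)) := by
    have h0 : e (X 0) = Polynomial.X := MvPolynomial.finSuccEquiv_X_zero
    have h1 : e (X 1) = Polynomial.C (X 0) := by
      have : (1 : Fin 2) = Fin.succ 0 := rfl
      rw [this, MvPolynomial.finSuccEquiv_X_succ]
    have h2 : e (C c) = Polynomial.C (C c) := by
      rw [he]; simp [MvPolynomial.finSuccEquiv_apply]
    rw [map_sub, map_mul, h0, h1, h2, map_neg, sub_eq_add_neg]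
    ring
  have hmul : (e g) * (Polynomial.C (X 0) * Polynomial.X + Polynomial.C (-(C c))) = 0 := by
    rw [← hF, ← map_mul, h, map_zero]
  by_contra hg
  have hge : e g ≠ 0 := fun h' => hg (by
    have := congrArg e.symm h'
    simpa using this)
  have hX0 : (X 0 : MvPolynomial (Fin 1) S) ≠ 0 := MvPolynomial.X_ne_zero 0
  set p : Polynomial (MvPolynomial (Fin 1) S) :=
    Polynomial.C (X 0) * Polynomial.X + Polynomial.C (-(C c)) with hp
  have hlead : p.leadingCoeff = X 0 := Polynomial.leadingCoeff_linear hX0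
  have hcoeff := Polynomial.coeff_mul_degree_add_degree (e g) p
  rw [hmul, Polynomial.coeff_zero, hlead] at hcoeff
  have : (e g).leadingCoeff = 0 := gwa_aux_X_regular 0 hcoeff.symm
  exact hge (Polynomial.leadingCoeff_eq_zero.mp this)

/-- An element of a minimal prime is a zero-divisor. -/
lemma gwa_aux_minimal_prime_zero_divisor {R : Type*} [CommRing R] {P : Ideal R}
    (hP : P ∈ minimalPrimes R) {x : R} (hx : x ∈ nonZeroDivisors R) : x ∉ P := by
  intro hxP
  haveI : P.IsPrime := hP.1.1
  have hmem : algebraMap R (Localization P.primeCompl) x ∈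
      IsLocalRing.maximalIdeal (Localization P.primeCompl) := by
    have := Localization.AtPrime.comap_maximalIdeal (I := P)
    rw [← this] at hxP
    exact hxP
  have hnil : IsNilpotent (algebraMap R (Localization P.primeCompl) x) :=
    (by haveI : Ring.KrullDimLE 0 (Localization P.primeCompl) := .of_isLocalization P hP _
        exact Ring.KrullDimLE.isNilpotent_iff_mem_maximalIdeal.mpr hmem)
  obtain ⟨n, hn⟩ := hnil
  rw [← map_pow] at hn
  obtain ⟨m, hm⟩ := (IsLocalization.map_eq_zero_iff P.primeCompl
    (Localization P.primeCompl) (x ^ n)).mp hn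
  have hxn : (x : R) ^ n ∈ nonZeroDivisors R := pow_mem hx n
  have : (m : R) = 0 := mem_nonZeroDivisors_iff_right.mp hxn _ hm
  have h0 : (0 : R) ∈ P.primeCompl := this ▸ m.2
  exact h0 P.zero_mem

/-- In `GWA D' a'` over a domain `D'`, the image of a nonzero `d'` is a non-zero-divisor. -/
lemma gwa_aux_regular_in_gwa {D' : Type*} [CommRing D'] [IsDomain D'] (a' : D')
    {d' : D'} (hd' : d' ≠ 0) :
    algebraMap D' (GWA D' a') d' ∈ nonZeroDivisors (GWA D' a') := by
  set f' : MvPolynomial (Fin 2) D' := X 0 * X 1 - C a' with hf'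
  set I' : Ideal (MvPolynomial (Fin 2) D') := Ideal.span {f'} with hI'
  rw [mem_nonZeroDivisors_iff_right]
  intro z hz
  obtain ⟨g, rfl⟩ := Ideal.Quotient.mk_surjective z
  have halg : algebraMap D' (GWA D' a') d' = Ideal.Quotient.mk I' (C d') := rfl
  rw [halg, ← map_mul, Ideal.Quotient.eq_zero_iff_mem] at hz
  obtain ⟨c, hc⟩ := Ideal.mem_span_singleton.mp hz
  -- reduce mod d'
  set ψ : MvPolynomial (Fin 2) D' →+* MvPolynomial (Fin 2) (D' ⧸ Ideal.span {d'}) :=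
    MvPolynomial.map (Ideal.Quotient.mk (Ideal.span {d'})) with hψ
  have hd'0 : Ideal.Quotient.mk (Ideal.span {d'}) d' = 0 :=
    Ideal.Quotient.eq_zero_iff_mem.mpr (Ideal.mem_span_singleton_self d')
  have hψeq : ψ c * (X 0 * X 1 - C (Ideal.Quotient.mk (Ideal.span {d'}) a')) = 0 := by
    have := congrArg ψ hc
    rw [map_mul, map_mul] at this
    have hCd : ψ (C d') = 0 := by
      rw [hψ, MvPolynomial.map_C, hd'0, map_zero]
    rw [hCd, mul_zero] at this
    have hf : ψ f' = X 0 * X 1 - C (Ideal.Quotient.mk (Ideal.span {d'}) a') := by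
      rw [hf', map_sub, map_mul, hψ]
      simp [MvPolynomial.map_C, MvPolynomial.map_X]
    rw [hf] at this
    rw [mul_comm] at this
    exact this.symm
  have hψc : ψ c = 0 := gwa_aux_f_regular _ hψeq
  have hcker : c ∈ RingHom.ker ψ := hψc
  rw [hψ, MvPolynomial.ker_map, Ideal.mk_ker, Ideal.map_span,
    Set.image_singleton] at hcker
  obtain ⟨e, he⟩ := Ideal.mem_span_singleton.mp hcker
  -- cancel C d'
  have hcancel : (g - f' * e) * C d' = 0 := by
    have : g * C d' = f' * e * C d' := by
      rw [hc, he]; ring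
    rw [sub_mul, this]; ring
  have hCd'ne : (C d' : MvPolynomial (Fin 2) D') ≠ 0 := by
    simpa using hd'
  have hge : g = f' * e := by
    rcases mul_eq_zero.mp hcancel with h | h
    · exact sub_eq_zero.mp h
    · exact absurd h hCd'ne
  rw [Ideal.Quotient.eq_zero_iff_mem, hge]
  exact Ideal.mem_span_singleton.mpr (Dvd.intro e rfl)

/-- If `P` is a minimal prime of `A = D[X,Y]/(XY - a)` over a commutative Noetherian ring `D`,
then `P ∩ D` is a minimal prime of `D`. -/
theorem gwa_comap_minimalPrime (D : Type*) [CommRing D] [IsNoetherianRing D] (a : D)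
    (P : Ideal (GWA D a)) (hP : P ∈ minimalPrimes (GWA D a)) :
    P.comap (algebraMap D (GWA D a)) ∈ minimalPrimes D := by
  haveI : P.IsPrime := hP.1.1
  set q : Ideal D := P.comap (algebraMap D (GWA D a)) with hq
  haveI : q.IsPrime := Ideal.IsPrime.comap _
  obtain ⟨q0, hq0, hq0le⟩ := Ideal.exists_minimalPrimes_le (I := (⊥ : Ideal D)) (J := q) bot_le
  suffices hle : q ≤ q0 by
    have : q = q0 := le_antisymm hle hq0le
    rwa [this]
  intro d hdq
  by_contra hd0
  haveI hq0p : q0.IsPrime := hq0.1.1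
  haveI : IsDomain (D ⧸ q0) := Ideal.Quotient.isDomain q0
  set a' : D ⧸ q0 := Ideal.Quotient.mk q0 a with ha'
  set f : MvPolynomial (Fin 2) D := X 0 * X 1 - C a with hf
  set f' : MvPolynomial (Fin 2) (D ⧸ q0) := X 0 * X 1 - C a' with hf'
  set I : Ideal (MvPolynomial (Fin 2) D) := Ideal.span {f} with hI
  set I' : Ideal (MvPolynomial (Fin 2) (D ⧸ q0)) := Ideal.span {f'} with hI'
  set g : MvPolynomial (Fin 2) D →+* MvPolynomial (Fin 2) (D ⧸ q0) :=
    MvPolynomial.map (Ideal.Quotient.mk q0) with hg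
  have hgf : g f = f' := by
    rw [hf, hf', hg, map_sub, map_mul]
    simp
    rfl
  have hgsurj : Function.Surjective g :=
    MvPolynomial.map_surjective _ Ideal.Quotient.mk_surjective
  have hIle : I ≤ I'.comap g := by
    rw [hI, Ideal.span_le]
    intro x hx
    rw [Set.mem_singleton_iff] at hx
    subst hx
    show g f ∈ I'
    rw [hgf]
    exact Ideal.subset_span (Set.mem_singleton _)
  set Φ : GWA D a →+* GWA (D ⧸ q0) a' := Ideal.quotientMap I' g hIle with hΦ
  have hΦmk : ∀ r, Φ (Ideal.Quotient.mk I r) = Ideal.Quotient.mk I' (g r) := fun r =>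
    Ideal.quotientMap_mk
  have hΦsurj : Function.Surjective Φ := by
    intro y
    obtain ⟨r', rfl⟩ := Ideal.Quotient.mk_surjective y
    obtain ⟨r, rfl⟩ := hgsurj r'
    exact ⟨Ideal.Quotient.mk I r, hΦmk r⟩
  have halg : ∀ x : D, algebraMap D (GWA D a) x = Ideal.Quotient.mk I (C x) := fun x => rfl
  have halg' : ∀ x : D ⧸ q0, algebraMap (D ⧸ q0) (GWA (D ⧸ q0) a') x =
      Ideal.Quotient.mk I' (C x) := fun x => rfl
  -- the kernel of Φ is contained in P
  have hker : RingHom.ker Φ ≤ P := by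
    intro x hx
    obtain ⟨r, rfl⟩ := Ideal.Quotient.mk_surjective x
    rw [RingHom.mem_ker, hΦmk, Ideal.Quotient.eq_zero_iff_mem] at hx
    obtain ⟨c, hc⟩ := Ideal.mem_span_singleton.mp hx
    obtain ⟨h, rfl⟩ := hgsurj c
    have hker_g : r - f * h ∈ RingHom.ker g := by
      rw [RingHom.mem_ker, map_sub, map_mul, hgf, hc]
      ring
    rw [MvPolynomial.ker_map, Ideal.mk_ker] at hker_g
    have hmkfh : Ideal.Quotient.mk I (f * h) = 0 :=
      Ideal.Quotient.eq_zero_iff_mem.mpr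
        (Ideal.mem_span_singleton.mpr (dvd_mul_right f h))
    have hr : Ideal.Quotient.mk I r = Ideal.Quotient.mk I (r - f * h) := by
      rw [map_sub, hmkfh, sub_zero]
    rw [hr]
    have hq0P : Ideal.map (Ideal.Quotient.mk I) (Ideal.map C q0) ≤ P := by
      rw [Ideal.map_le_iff_le_comap, Ideal.map_le_iff_le_comap]
      intro y hy
      show Ideal.Quotient.mk I (C y) ∈ P
      rw [← halg y]
      exact hq0le hy
    exact hq0P (Ideal.mem_map_of_mem _ hker_g)
  -- P maps to a minimal prime of the quotient GWA
  set P' : Ideal (GWA (D ⧸ q0) a') := P.map Φ with hP'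
  haveI hP'p : P'.IsPrime := Ideal.map_isPrime_of_surjective hΦsurj hker
  have hcomap : P'.comap Φ = P := by
    rw [hP', Ideal.comap_map_of_surjective Φ hΦsurj, ← RingHom.ker_eq_comap_bot]
    exact sup_eq_left.mpr hker
  have hPmin : Minimal Ideal.IsPrime P := by
    rwa [minimalPrimes_eq_minimals] at hP
  have hP'min : P' ∈ minimalPrimes (GWA (D ⧸ q0) a') := by
    rw [minimalPrimes_eq_minimals]
    refine ⟨hP'p, ?_⟩
    intro Q' hQ' hle'
    haveI := hQ'
    have h1 : Q'.comap Φ ≤ P := by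
      rw [← hcomap]; exact Ideal.comap_mono hle'
    have h2 : P ≤ Q'.comap Φ := hPmin.2 (Ideal.IsPrime.comap Φ) h1
    calc P' = Ideal.map Φ P := hP'
      _ ≤ Ideal.map Φ (Q'.comap Φ) := Ideal.map_mono h2
      _ = Q' := Ideal.map_comap_of_surjective Φ hΦsurj Q'
  -- the image of d is a nonzero element of the domain D ⧸ q0, lying in P'
  have hd'ne : Ideal.Quotient.mk q0 d ≠ 0 := fun h =>
    hd0 (Ideal.Quotient.eq_zero_iff_mem.mp h)
  have hreg := gwa_aux_regular_in_gwa a' hd'ne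
  have hdP' : algebraMap (D ⧸ q0) (GWA (D ⧸ q0) a') (Ideal.Quotient.mk q0 d) ∈ P' := by
    have hdP : algebraMap D (GWA D a) d ∈ P := hdq
    have := Ideal.mem_map_of_mem Φ hdP
    rw [halg d, hΦmk (C d)] at this
    rw [halg']
    have hgC : g (C d) = C (Ideal.Quotient.mk q0 d) := by
      rw [hg]; simp
    rwa [hgC] at this
  exact gwa_aux_minimal_prime_zero_divisor hP'min hreg hdP'
end

section
/- Let D be a commutative Noetherian ring, a ∈ D, and A = D[X,Y]/(XY - a). If p is a minimal prime of D with a ∈ p, then the ideals (p, X) and (p, Y) of A (generated by the image of p together with X, respectively Y) are distinct minimal primes of A. -/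
open MvPolynomial

set_option synthInstance.maxHeartbeats 400000
set_option maxHeartbeats 800000
set_option linter.unusedSectionVars false

/-- The image of the variable `X` in `A = D[X,Y]/(XY - a)`. -/
noncomputable def gwaX (D : Type*) [CommRing D] (a : D) : GWA D a :=
  Ideal.Quotient.mk _ (X 0)

/-- The image of the variable `Y` in `A = D[X,Y]/(XY - a)`. -/
noncomputable def gwaY (D : Type*) [CommRing D] (a : D) : GWA D a :=
  Ideal.Quotient.mk _ (X 1)

section Aux

variable {D : Type*} [CommRing D] (p : Ideal D) [p.IsPrime]

/-- Evaluation `X i ↦ 0`, other variable `↦ Polynomial.X`, coefficients mod `p`. -/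
noncomputable def gwaPsi (i : Fin 2) : MvPolynomial (Fin 2) D →+* Polynomial (D ⧸ p) :=
  eval₂Hom ((Polynomial.C : (D ⧸ p) →+* Polynomial (D ⧸ p)).comp (Ideal.Quotient.mk p))
    (fun k => if k = i then 0 else Polynomial.X)

theorem ker_gwaPsi (i j : Fin 2) (hij : i ≠ j) :
    RingHom.ker (gwaPsi p i) = Ideal.span ((C '' ↑p) ∪ {X i}) := by
  set J : Ideal (MvPolynomial (Fin 2) D) := Ideal.span ((C '' ↑p) ∪ {X i}) with hJ
  have hCp : ∀ d ∈ p, (C d : MvPolynomial (Fin 2) D) ∈ J := fun d hd =>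
    Ideal.subset_span (Or.inl ⟨d, hd, rfl⟩)
  have hXi : (X i : MvPolynomial (Fin 2) D) ∈ J := Ideal.subset_span (Or.inr rfl)
  have hlift : ∀ d ∈ p, ((Ideal.Quotient.mk J).comp (C : D →+* MvPolynomial (Fin 2) D)) d = 0 := by
    intro d hd
    simpa [Ideal.Quotient.eq_zero_iff_mem] using hCp d hd
  set h : Polynomial (D ⧸ p) →+* MvPolynomial (Fin 2) D ⧸ J :=
    Polynomial.eval₂RingHom
      (Ideal.Quotient.lift p ((Ideal.Quotient.mk J).comp (C : D →+* MvPolynomial (Fin 2) D)) hlift)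
      (Ideal.Quotient.mk J (X j)) with hh
  have key : h.comp (gwaPsi p i) = Ideal.Quotient.mk J := by
    apply MvPolynomial.ringHom_ext
    · intro d; simp [hh, gwaPsi]
    · intro k
      by_cases hk : k = i
      · subst hk
        simp [hh, gwaPsi, (Ideal.Quotient.eq_zero_iff_mem).2 hXi]
      · have hkj : k = j := by
          fin_cases i <;> fin_cases j <;> fin_cases k <;> simp_all
        subst hkj
        simp [hh, gwaPsi, hk]
  apply le_antisymm
  · intro f hf
    have h0 : Ideal.Quotient.mk J f = 0 := by
      rw [← key, RingHom.comp_apply, RingHom.mem_ker.1 hf, map_zero]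
    exact (Ideal.Quotient.eq_zero_iff_mem).1 h0
  · rw [hJ, Ideal.span_le]
    rintro x (⟨d, hd, rfl⟩ | rfl)
    · simp [RingHom.mem_ker, gwaPsi, Ideal.Quotient.eq_zero_iff_mem.2 hd]
    · simp [RingHom.mem_ker, gwaPsi]

theorem isPrime_gwaJ (i j : Fin 2) (hij : i ≠ j) :
    (Ideal.span ((C '' ↑p) ∪ {X i}) : Ideal (MvPolynomial (Fin 2) D)).IsPrime := by
  rw [← ker_gwaPsi p i j hij]
  exact RingHom.ker_isPrime _

theorem X_not_mem_gwaJ (i j : Fin 2) (hij : i ≠ j) :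
    (X j : MvPolynomial (Fin 2) D) ∉ Ideal.span ((C '' ↑p) ∪ {X i}) := by
  rw [← ker_gwaPsi p i j hij]
  intro hmem
  have h0 : gwaPsi p i (X j) = 0 := RingHom.mem_ker.1 hmem
  simp [gwaPsi, if_neg hij.symm, Polynomial.X_ne_zero] at h0

end Aux

section Aux2

variable {D : Type*} [CommRing D] (p : Ideal D)

theorem gwaJ_le_of_prime (a : D) (hp : p ∈ minimalPrimes D) (ha : a ∈ p) (i j : Fin 2)
    (hij : i ≠ j) (Q : Ideal (MvPolynomial (Fin 2) D)) (hQ : Q.IsPrime)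
    (hr : X i * X j - C a ∈ Q) (hQJ : Q ≤ Ideal.span ((C '' ↑p) ∪ {X i})) :
    Ideal.span ((C '' ↑p) ∪ {X i}) ≤ Q := by
  haveI := hp.1.1
  have hq0 : (Q.comap (C : D →+* MvPolynomial (Fin 2) D)) ≤ p := by
    intro d hd
    have hmem : (C d : MvPolynomial (Fin 2) D) ∈ Ideal.span ((C '' ↑p) ∪ {X i}) :=
      hQJ (Ideal.mem_comap.1 hd)
    rw [← ker_gwaPsi p i j hij] at hmem
    have h0 : gwaPsi p i (C d) = 0 := RingHom.mem_ker.1 hmem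
    simpa [gwaPsi, Polynomial.C_eq_zero, Ideal.Quotient.eq_zero_iff_mem] using h0
  haveI : (Q.comap (C : D →+* MvPolynomial (Fin 2) D)).IsPrime := Ideal.IsPrime.comap _
  have hple : p ≤ Q.comap (C : D →+* MvPolynomial (Fin 2) D) :=
    hp.2 ⟨inferInstance, bot_le⟩ hq0
  have hCa : (C a : MvPolynomial (Fin 2) D) ∈ Q := Ideal.mem_comap.1 (hple ha)
  have hXX : (X i * X j : MvPolynomial (Fin 2) D) ∈ Q := by
    have := Q.add_mem hr hCa; simpa using this
  rcases hQ.mem_or_mem hXX with hXi | hXj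
  · rw [Ideal.span_le]
    rintro x (⟨d, hd, rfl⟩ | rfl)
    · exact Ideal.mem_comap.1 (hple hd)
    · exact hXi
  · exact absurd (hQJ hXj) (X_not_mem_gwaJ p i j hij)

theorem gwa_map_minimal (a : D) (hp : p ∈ minimalPrimes D) (ha : a ∈ p) (i j : Fin 2)
    (hij : i ≠ j) (r : MvPolynomial (Fin 2) D) (hr : r = X i * X j - C a) :
    Ideal.map (Ideal.Quotient.mk (Ideal.span {r})) (Ideal.span ((C '' ↑p) ∪ {X i}))
      ∈ minimalPrimes (MvPolynomial (Fin 2) D ⧸ Ideal.span {r}) := by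
  haveI := hp.1.1
  set J : Ideal (MvPolynomial (Fin 2) D) := Ideal.span ((C '' ↑p) ∪ {X i}) with hJ
  have hXi : (X i : MvPolynomial (Fin 2) D) ∈ J := Ideal.subset_span (Or.inr rfl)
  have hCa : (C a : MvPolynomial (Fin 2) D) ∈ J := Ideal.subset_span (Or.inl ⟨a, ha, rfl⟩)
  have hrJ : r ∈ J := by
    rw [hr]; exact sub_mem (Ideal.mul_mem_right _ _ hXi) hCa
  have hker : RingHom.ker (Ideal.Quotient.mk (Ideal.span {r})) = Ideal.span {r} :=
    Ideal.mk_ker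
  have hkerle : Ideal.span {r} ≤ J := (Ideal.span_le).2 (by simpa using hrJ)
  haveI hJP : J.IsPrime := isPrime_gwaJ p i j hij
  haveI : (Ideal.map (Ideal.Quotient.mk (Ideal.span {r})) J).IsPrime :=
    Ideal.map_isPrime_of_surjective Ideal.Quotient.mk_surjective (by rw [hker]; exact hkerle)
  refine ⟨⟨inferInstance, bot_le⟩, ?_⟩
  rintro q ⟨hqP, -⟩ hle
  set Q : Ideal (MvPolynomial (Fin 2) D) := q.comap (Ideal.Quotient.mk (Ideal.span {r})) with hQdef
  haveI : Q.IsPrime := Ideal.IsPrime.comap _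
  have hQJ : Q ≤ J := by
    have h1 : Q ≤ Ideal.comap (Ideal.Quotient.mk (Ideal.span {r}))
        (Ideal.map (Ideal.Quotient.mk (Ideal.span {r})) J) := Ideal.comap_mono hle
    rwa [Ideal.comap_map_of_surjective _ Ideal.Quotient.mk_surjective, ← RingHom.ker_eq_comap_bot,
      hker, sup_eq_left.2 hkerle] at h1
  have hrQ : X i * X j - C a ∈ Q := by
    rw [← hr]
    refine Ideal.mem_comap.2 ?_
    have h0 : (Ideal.Quotient.mk (Ideal.span {r})) r = 0 :=
      Ideal.Quotient.eq_zero_iff_mem.2 (Ideal.subset_span rfl)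
    rw [h0]; exact q.zero_mem
  have hJQ : J ≤ Q := gwaJ_le_of_prime p a hp ha i j hij Q inferInstance hrQ hQJ
  calc Ideal.map (Ideal.Quotient.mk (Ideal.span {r})) J
      ≤ Ideal.map (Ideal.Quotient.mk (Ideal.span {r})) Q := Ideal.map_mono hJQ
    _ = q := Ideal.map_comap_of_surjective _ Ideal.Quotient.mk_surjective q

end Aux2

/-- If `p` is a minimal prime of the commutative Noetherian ring `D` with `a ∈ p`,
then the ideals `(p, X)` and `(p, Y)` of `A = D[X,Y]/(XY - a)` are distinct
minimal primes of `A`. -/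
theorem gwa_minimalPrimes_of_mem (D : Type*) [CommRing D] [IsNoetherianRing D] (a : D)
    (p : Ideal D) (hp : p ∈ minimalPrimes D) (ha : a ∈ p) :
    Ideal.span (algebraMap D (GWA D a) '' ↑p ∪ {gwaX D a}) ≠
      Ideal.span (algebraMap D (GWA D a) '' ↑p ∪ {gwaY D a}) ∧
    Ideal.span (algebraMap D (GWA D a) '' ↑p ∪ {gwaX D a}) ∈ minimalPrimes (GWA D a) ∧
    Ideal.span (algebraMap D (GWA D a) '' ↑p ∪ {gwaY D a}) ∈ minimalPrimes (GWA D a) := by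
  haveI := hp.1.1
  set r : MvPolynomial (Fin 2) D := X 0 * X 1 - C a with hrdef
  have halg : ⇑(algebraMap D (GWA D a)) = (⇑(Ideal.Quotient.mk (Ideal.span {r})) ∘ ⇑(C : D →+* MvPolynomial (Fin 2) D)) := rfl
  have hmap : ∀ i : Fin 2,
      Ideal.span ((algebraMap D (GWA D a)) '' ↑p ∪ {Ideal.Quotient.mk (Ideal.span {r}) (X i)}) =
      Ideal.map (Ideal.Quotient.mk (Ideal.span {r})) (Ideal.span ((C '' ↑p) ∪ {X i})) := by
    intro i
    rw [Ideal.map_span, Set.image_union, Set.image_singleton, ← Set.image_comp, halg]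
  have hX : gwaX D a = Ideal.Quotient.mk (Ideal.span {r}) (X 0) := rfl
  have hY : gwaY D a = Ideal.Quotient.mk (Ideal.span {r}) (X 1) := rfl
  rw [hX, hY, hmap 0, hmap 1]
  refine ⟨?_, ?_, ?_⟩
  · -- distinctness
    intro heq
    set J : Ideal (MvPolynomial (Fin 2) D) := Ideal.span ((C '' ↑p) ∪ {X 0}) with hJ
    have hXi : (X 0 : MvPolynomial (Fin 2) D) ∈ J := Ideal.subset_span (Or.inr rfl)
    have hCa : (C a : MvPolynomial (Fin 2) D) ∈ J := Ideal.subset_span (Or.inl ⟨a, ha, rfl⟩)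
    have hrJ : r ∈ J := sub_mem (Ideal.mul_mem_right _ _ hXi) hCa
    have hkerle : Ideal.span {r} ≤ J := (Ideal.span_le).2 (by simpa using hrJ)
    have hmem : Ideal.Quotient.mk (Ideal.span {r}) (X 1) ∈
        Ideal.map (Ideal.Quotient.mk (Ideal.span {r})) J := by
      rw [heq]
      exact Ideal.mem_map_of_mem _ (Ideal.subset_span (Or.inr rfl))
    have hmem2 : (X 1 : MvPolynomial (Fin 2) D) ∈
        Ideal.comap (Ideal.Quotient.mk (Ideal.span {r}))
          (Ideal.map (Ideal.Quotient.mk (Ideal.span {r})) J) := Ideal.mem_comap.2 hmem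
    rw [Ideal.comap_map_of_surjective _ Ideal.Quotient.mk_surjective, ← RingHom.ker_eq_comap_bot,
      Ideal.mk_ker, sup_eq_left.2 hkerle] at hmem2
    exact X_not_mem_gwaJ p 0 1 (by decide) hmem2
  · exact gwa_map_minimal p a hp ha 0 1 (by decide) r rfl
  · exact gwa_map_minimal p a hp ha 1 0 (by decide) r (by rw [hrdef]; ring)
end

section
/- Let D be a commutative Noetherian ring, a ∈ D, and A = D[X,Y]/(XY - a). If p is a minimal prime of D with a ∉ p, then the extended ideal pA is a minimal prime of A. -/
open MvPolynomial

section GwaAux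

variable {R : Type*} [CommRing R] (c : R)


lemma single_zrh (r : R) :
    (AddMonoidAlgebra.singleZeroRingHom r : AddMonoidAlgebra R ℤ) =
      AddMonoidAlgebra.single 0 r := rfl

lemma evalT_coeff (P : Polynomial R) (k : ℤ) :
    (Polynomial.eval₂ AddMonoidAlgebra.singleZeroRingHom
      (AddMonoidAlgebra.single (1 : ℤ) (1 : R)) P : AddMonoidAlgebra R ℤ).coeff k =
      if 0 ≤ k then P.coeff k.toNat else 0 := by
  induction P using Polynomial.induction_on' with
  | add p q hp hq =>
    rw [Polynomial.eval₂_add, AddMonoidAlgebra.coeff_add, Finsupp.add_apply, hp, hq, Polynomial.coeff_add]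
    split_ifs <;> simp
  | monomial n a =>
    rw [Polynomial.eval₂_monomial, AddMonoidAlgebra.single_pow, single_zrh,
      AddMonoidAlgebra.single_mul_single]
    simp only [one_pow, mul_one, zero_add, nsmul_eq_mul, Polynomial.coeff_monomial]
    by_cases hk : ((n : ℤ)) = k
    · subst hk
      rw [AddMonoidAlgebra.coeff_single, Finsupp.single_apply, if_pos rfl, if_pos (by omega)]
      simp
    · rw [AddMonoidAlgebra.coeff_single, Finsupp.single_apply, if_neg hk]
      split_ifs with h2 h3
      · exfalso; omega
      · rfl
      · rfl

lemma evalTinv_coeff (Q : Polynomial R) (k : ℤ) :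
    (Polynomial.eval₂ AddMonoidAlgebra.singleZeroRingHom
      (AddMonoidAlgebra.single (-1 : ℤ) c) Q : AddMonoidAlgebra R ℤ).coeff k =
      if k ≤ 0 then Q.coeff (-k).toNat * c ^ (-k).toNat else 0 := by
  induction Q using Polynomial.induction_on' with
  | add p q hp hq =>
    rw [Polynomial.eval₂_add, AddMonoidAlgebra.coeff_add, Finsupp.add_apply, hp, hq, Polynomial.coeff_add]
    split_ifs <;> simp [add_mul]
  | monomial n a =>
    rw [Polynomial.eval₂_monomial, AddMonoidAlgebra.single_pow, single_zrh,
      AddMonoidAlgebra.single_mul_single]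
    simp only [zero_add, nsmul_eq_mul, mul_neg_one, Polynomial.coeff_monomial]
    by_cases hk : (-(n : ℤ)) = k
    · subst hk
      rw [AddMonoidAlgebra.coeff_single, Finsupp.single_apply, if_pos rfl, if_pos (by omega),
        show ((-(-(n:ℤ))).toNat) = n by omega]
      simp
    · rw [AddMonoidAlgebra.coeff_single, Finsupp.single_apply, if_neg hk]
      split_ifs with h2 h3
      · exfalso; omega
      · simp
      · rfl


lemma gwa_reduce (g : MvPolynomial (Fin 2) R) :
    ∃ P Q : Polynomial R,
      g - (Polynomial.aeval (X 0) P + Polynomial.aeval (X 1) Q) ∈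
        Ideal.span {X 0 * X 1 - C c} := by
  induction g using MvPolynomial.induction_on with
  | C a =>
    exact ⟨Polynomial.C a, 0, by
      simp [Polynomial.aeval_C, MvPolynomial.algebraMap_eq]⟩
  | add p q hp hq =>
    obtain ⟨P1, Q1, h1⟩ := hp
    obtain ⟨P2, Q2, h2⟩ := hq
    refine ⟨P1 + P2, Q1 + Q2, ?_⟩
    have := Ideal.add_mem _ h1 h2
    convert this using 1
    simp only [map_add]
    ring
  | mul_X g n ih =>
    obtain ⟨P, Q, h⟩ := ih
    have hf : X 1 * X 0 - C c ∈ Ideal.span {X 0 * X 1 - (C c : MvPolynomial (Fin 2) R)} := by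
      rw [mul_comm]; exact Ideal.subset_span rfl
    have hf' : X 0 * X 1 - C c ∈ Ideal.span {X 0 * X 1 - (C c : MvPolynomial (Fin 2) R)} :=
      Ideal.subset_span rfl
    have hn : n = 0 ∨ n = 1 := by omega
    rcases hn with hn | hn <;> subst hn
    · refine ⟨(P + Polynomial.C (Q.coeff 0)) * Polynomial.X, Polynomial.C c * Q.divX, ?_⟩
      have key : g * X 0 -
          (Polynomial.aeval (X 0) ((P + Polynomial.C (Q.coeff 0)) * Polynomial.X) +
            Polynomial.aeval (X 1) (Polynomial.C c * Q.divX)) =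
          (g - (Polynomial.aeval (X 0) P + Polynomial.aeval (X 1) Q)) * X 0 +
            (Polynomial.aeval (X 1) Q.divX) * (X 1 * X 0 - C c) := by
        have hQ : (Polynomial.aeval (X 1 : MvPolynomial (Fin 2) R)) Q =
            X 1 * Polynomial.aeval (X 1) Q.divX + C (Q.coeff 0) := by
          conv_lhs => rw [← Polynomial.X_mul_divX_add Q]
          rw [map_add, map_mul, Polynomial.aeval_X, Polynomial.aeval_C,
            MvPolynomial.algebraMap_eq]
        rw [hQ]
        simp only [map_mul, map_add, Polynomial.aeval_X, Polynomial.aeval_C,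
          MvPolynomial.algebraMap_eq]
        ring
      rw [key]
      exact Ideal.add_mem _ (Ideal.mul_mem_right _ _ h) (Ideal.mul_mem_left _ _ hf)
    · refine ⟨Polynomial.C c * P.divX, (Q + Polynomial.C (P.coeff 0)) * Polynomial.X, ?_⟩
      have key : g * X 1 -
          (Polynomial.aeval (X 0) (Polynomial.C c * P.divX) +
            Polynomial.aeval (X 1) ((Q + Polynomial.C (P.coeff 0)) * Polynomial.X)) =
          (g - (Polynomial.aeval (X 0) P + Polynomial.aeval (X 1) Q)) * X 1 +
            (Polynomial.aeval (X 0) P.divX) * (X 0 * X 1 - C c) := by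
        have hP : (Polynomial.aeval (X 0 : MvPolynomial (Fin 2) R)) P =
            X 0 * Polynomial.aeval (X 0) P.divX + C (P.coeff 0) := by
          conv_lhs => rw [← Polynomial.X_mul_divX_add P]
          rw [map_add, map_mul, Polynomial.aeval_X, Polynomial.aeval_C,
            MvPolynomial.algebraMap_eq]
        rw [hP]
        simp only [map_mul, map_add, Polynomial.aeval_X, Polynomial.aeval_C,
          MvPolynomial.algebraMap_eq]
        ring
      rw [key]
      exact Ideal.add_mem _ (Ideal.mul_mem_right _ _ h) (Ideal.mul_mem_left _ _ hf')

noncomputable def gwaPhi : MvPolynomial (Fin 2) R →+* AddMonoidAlgebra R ℤ :=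
  eval₂Hom AddMonoidAlgebra.singleZeroRingHom
    (fun i => if i = 0 then AddMonoidAlgebra.single (1 : ℤ) (1 : R) else AddMonoidAlgebra.single (-1 : ℤ) c)

lemma gwaPhi_C (r : R) : gwaPhi c (C r) = AddMonoidAlgebra.single 0 r := by
  simp [gwaPhi, AddMonoidAlgebra.singleZeroRingHom]

lemma gwaPhi_X0 : gwaPhi c (X 0) = AddMonoidAlgebra.single (1 : ℤ) (1 : R) := by simp [gwaPhi]

lemma gwaPhi_X1 : gwaPhi c (X 1) = AddMonoidAlgebra.single (-1 : ℤ) c := by simp [gwaPhi]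

lemma gwaPhi_f : gwaPhi c (X 0 * X 1 - C c) = 0 := by
  rw [map_sub, map_mul, gwaPhi_C, gwaPhi_X0, gwaPhi_X1, AddMonoidAlgebra.single_mul_single]
  simp

lemma span_le_ker : Ideal.span {X 0 * X 1 - C c} ≤ RingHom.ker (gwaPhi c) := by
  rw [Ideal.span_le, Set.singleton_subset_iff]
  exact gwaPhi_f c

lemma gwa_ker_le [IsDomain R] (hc : c ≠ 0) :
    RingHom.ker (gwaPhi c) ≤ Ideal.span {X 0 * X 1 - C c} := by
  intro g hg
  obtain ⟨P, Q, hm⟩ := gwa_reduce c g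
  have hcomp : (gwaPhi c).comp (algebraMap R (MvPolynomial (Fin 2) R)) =
      AddMonoidAlgebra.singleZeroRingHom := RingHom.ext fun r => by
    rw [RingHom.comp_apply, MvPolynomial.algebraMap_eq, gwaPhi_C]; rfl
  have h1 : gwaPhi c (Polynomial.aeval (X 0) P) =
      Polynomial.eval₂ AddMonoidAlgebra.singleZeroRingHom (AddMonoidAlgebra.single (1 : ℤ) (1 : R)) P := by
    rw [Polynomial.aeval_def, Polynomial.hom_eval₂, hcomp, gwaPhi_X0]
  have h2 : gwaPhi c (Polynomial.aeval (X 1) Q) =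
      Polynomial.eval₂ AddMonoidAlgebra.singleZeroRingHom (AddMonoidAlgebra.single (-1 : ℤ) c) Q := by
    rw [Polynomial.aeval_def, Polynomial.hom_eval₂, hcomp, gwaPhi_X1]
  have hm' : gwaPhi c (Polynomial.aeval (X 0) P + Polynomial.aeval (X 1) Q) = 0 := by
    have h4 : gwaPhi c g = 0 := hg
    have h3 : gwaPhi c (g - (Polynomial.aeval (X 0) P + Polynomial.aeval (X 1) Q)) = 0 :=
      span_le_ker c hm
    rw [map_sub, h4, zero_sub, neg_eq_zero] at h3
    exact h3
  have hco : ∀ k : ℤ, (if 0 ≤ k then P.coeff k.toNat else 0) +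
      (if k ≤ 0 then Q.coeff (-k).toNat * c ^ (-k).toNat else 0) = 0 := by
    intro k
    have h5 : (gwaPhi c (Polynomial.aeval (X 0) P + Polynomial.aeval (X 1) Q)).coeff k = 0 := by
      rw [hm']; rfl
    rw [map_add, h1, h2, AddMonoidAlgebra.coeff_add, Finsupp.add_apply, evalT_coeff, evalTinv_coeff] at h5
    exact h5
  have hPk : ∀ n : ℕ, 1 ≤ n → P.coeff n = 0 := by
    intro n hn
    have := hco n
    rw [if_pos (by omega), if_neg (by omega), add_zero, Int.toNat_natCast] at this
    exact this
  have hQk : ∀ n : ℕ, 1 ≤ n → Q.coeff n = 0 := by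
    intro n hn
    have := hco (-(n : ℤ))
    rw [if_neg (by omega), if_pos (by omega), zero_add, neg_neg, Int.toNat_natCast] at this
    rcases mul_eq_zero.mp this with h | h
    · exact h
    · exact absurd h (pow_ne_zero _ hc)
  have h0 : P.coeff 0 + Q.coeff 0 = 0 := by simpa using hco 0
  have hPe : P = Polynomial.C (P.coeff 0) := Polynomial.ext fun n => by
    cases n with
    | zero => simp
    | succ k => rw [Polynomial.coeff_C, if_neg (by omega), hPk (k + 1) (by omega)]
  have hQe : Q = Polynomial.C (Q.coeff 0) := Polynomial.ext fun n => by
    cases n with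
    | zero => simp
    | succ k => rw [Polynomial.coeff_C, if_neg (by omega), hQk (k + 1) (by omega)]
  have hmz : Polynomial.aeval (X 0 : MvPolynomial (Fin 2) R) P
      + Polynomial.aeval (X 1 : MvPolynomial (Fin 2) R) Q = 0 := by
    rw [hPe, hQe, Polynomial.aeval_C, Polynomial.aeval_C, ← map_add, h0, map_zero]
  simpa [hmz] using hm

end GwaAux

/-- If `p` is a minimal prime of the commutative Noetherian ring `D` with `a ∉ p`,
then the extended ideal `pA` is a minimal prime of `A = D[X,Y]/(XY - a)`. -/
theorem gwa_map_minimalPrime_of_not_mem (D : Type*) [CommRing D] [IsNoetherianRing D] (a : D)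
    (p : Ideal D) (hp : p ∈ minimalPrimes D) (ha : a ∉ p) :
    p.map (algebraMap D (GWA D a)) ∈ minimalPrimes (GWA D a) := by
  classical
  have hpp : p.IsPrime := hp.1.1
  haveI := hpp
  set R := D ⧸ p with hR
  set c : R := Ideal.Quotient.mk p a with hc0
  have hc : c ≠ 0 := fun h => ha (Ideal.Quotient.eq_zero_iff_mem.mp h)
  set J : Ideal (MvPolynomial (Fin 2) D) := Ideal.span {X 0 * X 1 - C a} with hJdef
  set Φ₀ : MvPolynomial (Fin 2) D →+* AddMonoidAlgebra R ℤ :=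
    (gwaPhi c).comp (MvPolynomial.map (Ideal.Quotient.mk p)) with hΦ₀
  have hmapf : MvPolynomial.map (Ideal.Quotient.mk p) (X 0 * X 1 - C a) =
      (X 0 * X 1 - C c : MvPolynomial (Fin 2) R) := by
    rw [map_sub, map_mul, MvPolynomial.map_X, MvPolynomial.map_X, MvPolynomial.map_C]
  have hJker : ∀ x ∈ J, Φ₀ x = 0 := by
    intro x hx
    rw [hJdef, Ideal.mem_span_singleton] at hx
    obtain ⟨z, rfl⟩ := hx
    rw [map_mul, RingHom.comp_apply, hmapf, gwaPhi_f, zero_mul]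
  set Φ : GWA D a →+* AddMonoidAlgebra R ℤ := Ideal.Quotient.lift J Φ₀ hJker with hΦ
  have halg : ∀ x : D, algebraMap D (GWA D a) x = Ideal.Quotient.mk J (C x) := fun x => rfl
  have hΦalg : ∀ x : D, Φ (algebraMap D (GWA D a) x) = AddMonoidAlgebra.single 0 (Ideal.Quotient.mk p x) := by
    intro x
    rw [halg, hΦ, Ideal.Quotient.lift_mk, hΦ₀, RingHom.comp_apply, MvPolynomial.map_C, gwaPhi_C]
  have hker : RingHom.ker Φ = p.map (algebraMap D (GWA D a)) := by
    apply le_antisymm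
    · intro t ht
      obtain ⟨g, rfl⟩ := Ideal.Quotient.mk_surjective t
      have hg : Φ₀ g = 0 := ht
      have hg2 : MvPolynomial.map (Ideal.Quotient.mk p) g ∈
          Ideal.span {X 0 * X 1 - (C c : MvPolynomial (Fin 2) R)} :=
        gwa_ker_le c hc hg
      rw [Ideal.mem_span_singleton] at hg2
      obtain ⟨z, hz⟩ := hg2
      obtain ⟨h, rfl⟩ := MvPolynomial.map_surjective _ Ideal.Quotient.mk_surjective z
      have hu : g - (X 0 * X 1 - C a) * h ∈ Ideal.map MvPolynomial.C p := by
        rw [← Ideal.mk_ker (I := p), ← MvPolynomial.ker_map]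
        rw [RingHom.mem_ker, map_sub, map_mul, hmapf, hz, sub_self]
      have hmkg : Ideal.Quotient.mk J g = Ideal.Quotient.mk J (g - (X 0 * X 1 - C a) * h) := by
        rw [map_sub, map_mul]
        have : Ideal.Quotient.mk J (X 0 * X 1 - C a) = 0 :=
          Ideal.Quotient.eq_zero_iff_mem.mpr (Ideal.subset_span rfl)
        rw [this, zero_mul, sub_zero]
      rw [hmkg]
      have : Ideal.Quotient.mk J (g - (X 0 * X 1 - C a) * h) ∈
          Ideal.map (Ideal.Quotient.mk J) (Ideal.map MvPolynomial.C p) :=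
        Ideal.mem_map_of_mem _ hu
      rwa [Ideal.map_map, show (Ideal.Quotient.mk J).comp MvPolynomial.C =
        algebraMap D (GWA D a) from RingHom.ext fun x => (halg x).symm] at this
    · rw [Ideal.map_le_iff_le_comap]
      intro x hx
      rw [Ideal.mem_comap, RingHom.mem_ker, hΦalg,
        Ideal.Quotient.eq_zero_iff_mem.mpr hx, AddMonoidAlgebra.single_zero]
  haveI : IsDomain (AddMonoidAlgebra R ℤ) := NoZeroDivisors.to_isDomain _
  have hprime : (p.map (algebraMap D (GWA D a))).IsPrime := hker ▸ RingHom.ker_isPrime Φ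
  have hcom : (p.map (algebraMap D (GWA D a))).comap (algebraMap D (GWA D a)) = p := by
    apply le_antisymm
    · intro x hx
      rw [Ideal.mem_comap, ← hker, RingHom.mem_ker, hΦalg] at hx
      exact Ideal.Quotient.eq_zero_iff_mem.mp (by
        have := hx
        rwa [AddMonoidAlgebra.single_eq_zero] at this)
    · exact Ideal.le_comap_map
  refine ⟨⟨hprime, bot_le⟩, ?_⟩
  intro q hq hle
  haveI := hq.1
  have h1 : q.comap (algebraMap D (GWA D a)) ≤ p := by
    rw [← hcom]; exact Ideal.comap_mono hle
  have h2 : p ≤ q.comap (algebraMap D (GWA D a)) :=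
    hp.2 ⟨Ideal.IsPrime.comap _, bot_le⟩ h1
  exact Ideal.map_le_iff_le_comap.mpr h2
end

section
/- Let D be a commutative Noetherian ring and A = D[X,Y]/(XY - a). Then the number of minimal primes of A is at least the number of minimal primes of D, with equality if and only if a lies in no minimal prime of D. -/
open MvPolynomial

namespace GWA

variable {D : Type*} [CommRing D] (a : D)

noncomputable def mk : MvPolynomial (Fin 2) D →+* GWA D a := Ideal.Quotient.mk _
noncomputable def xx : GWA D a := mk a (X 0)
noncomputable def yy : GWA D a := mk a (X 1)
noncomputable def cc : D →+* GWA D a := (mk a).comp C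

lemma x_mul_y : xx a * yy a = cc a a := by
  have h : mk a (X 0 * X 1 - C a) = 0 := by
    rw [mk, Ideal.Quotient.eq_zero_iff_mem]
    exact Ideal.subset_span rfl
  rw [map_sub, sub_eq_zero, map_mul] at h
  exact h

private lemma eval₂_divX {S : Type*} [CommRing S] (f : D →+* S) (x : S) (W : Polynomial D) :
    Polynomial.eval₂ f x W = x * Polynomial.eval₂ f x W.divX + f (W.coeff 0) := by
  conv_lhs => rw [← Polynomial.X_mul_divX_add W]
  rw [Polynomial.eval₂_add, Polynomial.eval₂_mul, Polynomial.eval₂_X, Polynomial.eval₂_C]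

/-- Normal form elements. -/
noncomputable def nf (P Q : Polynomial D) : GWA D a :=
  P.eval₂ (cc a) (xx a) + yy a * Q.eval₂ (cc a) (yy a)

lemma nf_mul_x (P Q : Polynomial D) :
    nf a P Q * xx a = nf a (Polynomial.X * P + Polynomial.C ((Polynomial.C a * Q).coeff 0))
      ((Polynomial.C a * Q).divX) := by
  have h := eval₂_divX (cc a) (yy a) (Polynomial.C a * Q)
  rw [nf, nf]
  simp only [Polynomial.eval₂_add, Polynomial.eval₂_mul, Polynomial.eval₂_X,
    Polynomial.eval₂_C] at h ⊢
  linear_combination Polynomial.eval₂ (cc a) (yy a) Q * x_mul_y a + h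

lemma nf_mul_y (P Q : Polynomial D) :
    nf a P Q * yy a = nf a (Polynomial.C a * P.divX)
      (Polynomial.C (P.coeff 0) + Polynomial.X * Q) := by
  have h := eval₂_divX (cc a) (xx a) P
  rw [nf, nf]
  simp only [Polynomial.eval₂_add, Polynomial.eval₂_mul, Polynomial.eval₂_X,
    Polynomial.eval₂_C] at h ⊢
  linear_combination Polynomial.eval₂ (cc a) (xx a) P.divX * x_mul_y a + yy a * h

lemma nf_exists (F : GWA D a) : ∃ P Q, F = nf a P Q := by
  obtain ⟨G, rfl⟩ := Ideal.Quotient.mk_surjective (I := (Ideal.span {X 0 * X 1 - C a} :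
    Ideal (MvPolynomial (Fin 2) D))) F
  show ∃ P Q, mk a G = nf a P Q
  induction G using MvPolynomial.induction_on with
  | C d => exact ⟨Polynomial.C d, 0, by simp [nf, mk, cc]⟩
  | add p q hp hq =>
      obtain ⟨P1, Q1, h1⟩ := hp; obtain ⟨P2, Q2, h2⟩ := hq
      refine ⟨P1 + P2, Q1 + Q2, ?_⟩
      rw [map_add, h1, h2, nf, nf, nf]
      simp only [Polynomial.eval₂_add]
      ring
  | mul_X p i hp =>
      obtain ⟨P, Q, h⟩ := hp
      fin_cases i
      · exact ⟨_, _, by rw [map_mul, h, ← nf_mul_x]; rfl⟩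
      · exact ⟨_, _, by rw [map_mul, h, ← nf_mul_y]; rfl⟩

section Desc

variable {S : Type*} [CommRing S] (f : D →+* S) (u v : S) (huv : u * v = f a)

/-- Descend a pair of elements satisfying the defining relation to a ring hom on `GWA`. -/
noncomputable def desc : GWA D a →+* S :=
  Ideal.Quotient.lift _ (eval₂Hom f ![u, v]) (by
    intro r hr
    rw [Ideal.mem_span_singleton'] at hr
    obtain ⟨c, rfl⟩ := hr
    rw [map_mul, map_sub, map_mul, eval₂Hom_X', eval₂Hom_X', eval₂Hom_C]
    simp only [Matrix.cons_val_zero, Matrix.cons_val_one, Matrix.head_cons]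
    rw [huv, sub_self, mul_zero])

lemma desc_mk (G : MvPolynomial (Fin 2) D) :
    desc a f u v huv (mk a G) = eval₂Hom f ![u, v] G := rfl

lemma desc_cc (d : D) : desc a f u v huv (cc a d) = f d := by
  rw [cc, RingHom.comp_apply, desc_mk, eval₂Hom_C]

lemma desc_x : desc a f u v huv (xx a) = u := by
  rw [xx, desc_mk, eval₂Hom_X']; rfl

lemma desc_y : desc a f u v huv (yy a) = v := by
  rw [yy, desc_mk, eval₂Hom_X']; rfl

lemma desc_nf (P Q : Polynomial D) :
    desc a f u v huv (nf a P Q) = P.eval₂ f u + v * Q.eval₂ f v := by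
  rw [nf, RingHom.map_add, RingHom.map_mul, Polynomial.hom_eval₂, Polynomial.hom_eval₂,
    desc_x, desc_y]
  have hc : (desc a f u v huv).comp (cc a) = f := RingHom.ext (desc_cc a f u v huv)
  rw [hc]

end Desc

section Laurent

lemma single_rel : (AddMonoidAlgebra.single (1 : ℤ) (1 : D)) * AddMonoidAlgebra.single (-1) a
    = AddMonoidAlgebra.singleZeroRingHom a := by
  rw [AddMonoidAlgebra.single_mul_single]
  norm_num

noncomputable def lau : GWA D a →+* AddMonoidAlgebra D ℤ :=
  desc a AddMonoidAlgebra.singleZeroRingHom (AddMonoidAlgebra.single 1 1)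
    (AddMonoidAlgebra.single (-1) a) (single_rel a)

lemma lau_nf (P Q : Polynomial D) :
    lau a (nf a P Q) = P.sum (fun n c => AddMonoidAlgebra.single (n : ℤ) c)
      + Q.sum (fun n c => AddMonoidAlgebra.single (-(n : ℤ) - 1) (a ^ (n + 1) * c)) := by
  rw [lau, desc_nf]
  congr 1
  · rw [Polynomial.eval₂_eq_sum, Polynomial.sum_def, Polynomial.sum_def]
    refine Finset.sum_congr rfl fun n _ => ?_
    show AddMonoidAlgebra.single 0 _ * AddMonoidAlgebra.single 1 1 ^ n = _
    rw [AddMonoidAlgebra.single_pow, AddMonoidAlgebra.single_mul_single]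
    simp
  · rw [Polynomial.eval₂_eq_sum, Polynomial.sum_def, Finset.mul_sum, Polynomial.sum_def]
    refine Finset.sum_congr rfl fun n _ => ?_
    show AddMonoidAlgebra.single (-1) a * (AddMonoidAlgebra.single 0 _ *
      AddMonoidAlgebra.single (-1) a ^ n) = _
    rw [AddMonoidAlgebra.single_pow, AddMonoidAlgebra.single_mul_single,
      AddMonoidAlgebra.single_mul_single]
    congr 1
    · simp; ring
    · ring

lemma lau_nf_zero {P Q : Polynomial D} (h : lau a (nf a P Q) = 0) (n : ℕ) :
    P.coeff n = 0 ∧ a ^ (n + 1) * Q.coeff n = 0 := by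
  rw [lau_nf] at h
  have H' : (P.sum (fun n c => Finsupp.single (n : ℤ) c)
      + Q.sum (fun n c => Finsupp.single (-(n : ℤ) - 1) (a ^ (n + 1) * c)) : ℤ →₀ D) = 0 := by
      have := congrArg AddMonoidAlgebra.coeff h
      simpa only [AddMonoidAlgebra.coeff_add, AddMonoidAlgebra.coeff_zero, Polynomial.sum_def,
        AddMonoidAlgebra.coeff_sum, AddMonoidAlgebra.coeff_single] using this
  constructor
  · have := DFunLike.congr_fun H' (n : ℤ)
    rw [Finsupp.add_apply, Polynomial.sum_def, Polynomial.sum_def,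
      Finsupp.finset_sum_apply, Finsupp.finset_sum_apply] at this
    simp only [Finsupp.single_apply, Nat.cast_inj] at this
    rw [Finset.sum_ite_eq' P.support n P.coeff] at this
    have h2 : (Q.support.sum fun k => if (-(k:ℤ) - 1 = (n:ℤ)) then a ^ (k+1) * Q.coeff k else 0)
        = 0 := Finset.sum_eq_zero fun k _ => by rw [if_neg (by omega)]
    rw [h2, add_zero] at this
    by_cases hn : n ∈ P.support
    · rwa [if_pos hn] at this
    · exact Polynomial.notMem_support_iff.mp hn
  · have := DFunLike.congr_fun H' (-(n : ℤ) - 1)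
    rw [Finsupp.add_apply, Polynomial.sum_def, Polynomial.sum_def,
      Finsupp.finset_sum_apply, Finsupp.finset_sum_apply] at this
    simp only [Finsupp.single_apply] at this
    have h1 : (P.support.sum fun k => if ((k:ℤ) = -(n:ℤ) - 1) then P.coeff k else 0)
        = 0 := Finset.sum_eq_zero fun k _ => by rw [if_neg (by omega)]
    have h2 : ∀ k : ℕ, (-(k:ℤ) - 1 = -(n:ℤ) - 1) ↔ k = n := by intro k; omega
    simp only [h2] at this
    rw [Finset.sum_ite_eq' Q.support n (fun k => a ^ (k+1) * Q.coeff k), h1, zero_add] at this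
    by_cases hn : n ∈ Q.support
    · rwa [if_pos hn] at this
    · rw [Polynomial.notMem_support_iff.mp hn, mul_zero]

lemma cc_injective : Function.Injective (cc a) := by
  refine (injective_iff_map_eq_zero _).mpr fun d hd => ?_
  have : lau a (cc a d) = 0 := by rw [hd, RingHom.map_zero]
  rw [lau, desc_cc] at this
  have : (Finsupp.single 0 d : ℤ →₀ D) = 0 := congrArg AddMonoidAlgebra.coeff this
  simpa using (Finsupp.single_eq_zero).mp this

lemma isDomain [IsDomain D] (ha : a ≠ 0) : IsDomain (GWA D a) := by
  have hinj : Function.Injective (lau a) := by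
    refine (injective_iff_map_eq_zero _).mpr fun F hF => ?_
    obtain ⟨P, Q, rfl⟩ := nf_exists a F
    have key := lau_nf_zero a hF
    have hP : P = 0 := Polynomial.ext fun n => (key n).1
    have hQ : Q = 0 := Polynomial.ext fun n => by
      have := (key n).2
      exact (mul_eq_zero.mp this).resolve_left (pow_ne_zero _ ha)
    rw [hP, hQ, nf]
    simp
  haveI : IsDomain (AddMonoidAlgebra D ℤ) := NoZeroDivisors.to_isDomain _
  exact Function.Injective.isDomain (lau a) hinj

end Laurent

section IdealLemmas

variable (p : Ideal D)

lemma eval₂_mem_map {W : Polynomial D} (hW : ∀ n, W.coeff n ∈ p) (s : GWA D a) :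
    W.eval₂ (cc a) s ∈ p.map (cc a) := by
  rw [Polynomial.eval₂_eq_sum, Polynomial.sum_def]
  exact Ideal.sum_mem _ fun n _ =>
    Ideal.mul_mem_right _ _ (Ideal.mem_map_of_mem _ (hW n))

lemma nf_mem_map {P Q : Polynomial D} (hP : ∀ n, P.coeff n ∈ p) (hQ : ∀ n, Q.coeff n ∈ p) :
    nf a P Q ∈ p.map (cc a) := by
  rw [nf]
  exact add_mem (eval₂_mem_map a p hP _) (Ideal.mul_mem_left _ _ (eval₂_mem_map a p hQ _))

end IdealLemmas

section Theta

variable (p : Ideal D) [p.IsPrime]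

local notation "π" => Ideal.Quotient.mk p

/-- The reduction `GWA D a → GWA (D/p) ā`. -/
noncomputable def thetaP : GWA D a →+* GWA (D ⧸ p) (π a) :=
  desc a ((cc (π a)).comp π) (xx (π a)) (yy (π a)) (by
    rw [x_mul_y]; rfl)

lemma ker_thetaP (ha : a ∉ p) : RingHom.ker (thetaP a p) = p.map (cc a) := by
  have hb : (π a) ≠ 0 := fun h => ha (Ideal.Quotient.eq_zero_iff_mem.mp h)
  apply le_antisymm
  · intro F hF
    rw [RingHom.mem_ker] at hF
    obtain ⟨P, Q, rfl⟩ := nf_exists a F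
    rw [thetaP, desc_nf, ← Polynomial.eval₂_map, ← Polynomial.eval₂_map] at hF
    have hF' : nf (π a) (P.map π) (Q.map π) = 0 := hF
    have key := lau_nf_zero (π a) (by rw [hF', RingHom.map_zero] :
      lau (π a) (nf (π a) (P.map π) (Q.map π)) = 0)
    refine nf_mem_map a p (fun n => ?_) (fun n => ?_)
    · have := (key n).1
      rw [Polynomial.coeff_map] at this
      exact Ideal.Quotient.eq_zero_iff_mem.mp this
    · have := (key n).2
      have h0 : (Q.map π).coeff n = 0 :=
        (mul_eq_zero.mp this).resolve_left (pow_ne_zero _ hb)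
      rw [Polynomial.coeff_map] at h0
      exact Ideal.Quotient.eq_zero_iff_mem.mp h0
  · rw [Ideal.map_le_iff_le_comap]
    intro d hd
    rw [Ideal.mem_comap, RingHom.mem_ker, thetaP, desc_cc, RingHom.comp_apply,
      Ideal.Quotient.eq_zero_iff_mem.mpr hd, RingHom.map_zero]

lemma thetaP_cc (d : D) : thetaP a p (cc a d) = cc (π a) (π d) := by
  rw [thetaP, desc_cc, RingHom.comp_apply]

lemma comap_map_cc (ha : a ∉ p) : (p.map (cc a)).comap (cc a) = p := by
  have hb : (π a) ≠ 0 := fun h => ha (Ideal.Quotient.eq_zero_iff_mem.mp h)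
  rw [← ker_thetaP a p ha]
  ext d
  rw [Ideal.mem_comap, RingHom.mem_ker, thetaP_cc]
  constructor
  · intro h
    have : π d = 0 := by
      have h0 : cc (π a) (π d) = cc (π a) 0 := by rw [h, RingHom.map_zero]
      exact cc_injective (π a) h0
    exact Ideal.Quotient.eq_zero_iff_mem.mp this
  · intro h
    rw [Ideal.Quotient.eq_zero_iff_mem.mpr h, RingHom.map_zero]

lemma map_cc_isPrime (ha : a ∉ p) : (p.map (cc a)).IsPrime := by
  have hb : (π a) ≠ 0 := fun h => ha (Ideal.Quotient.eq_zero_iff_mem.mp h)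
  rw [← ker_thetaP a p ha]
  haveI : IsDomain (GWA (D ⧸ p) (π a)) := isDomain (π a) hb
  exact RingHom.ker_isPrime _

/-- The evaluation `GWA D a → (D/p)[Y]` killing `x`, for `a ∈ p`. -/
noncomputable def theta1 (ha : a ∈ p) : GWA D a →+* Polynomial (D ⧸ p) :=
  desc a ((Polynomial.C).comp π) 0 Polynomial.X
    (by simp [RingHom.comp_apply, Ideal.Quotient.eq_zero_iff_mem.mpr ha])

/-- The evaluation `GWA D a → (D/p)[X]` killing `y`, for `a ∈ p`. -/
noncomputable def theta2 (ha : a ∈ p) : GWA D a →+* Polynomial (D ⧸ p) :=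
  desc a ((Polynomial.C).comp π) Polynomial.X 0
    (by simp [RingHom.comp_apply, Ideal.Quotient.eq_zero_iff_mem.mpr ha])

variable {a p}

lemma theta1_ker_isPrime (ha : a ∈ p) : (RingHom.ker (theta1 a p ha)).IsPrime :=
  RingHom.ker_isPrime _

lemma theta2_ker_isPrime (ha : a ∈ p) : (RingHom.ker (theta2 a p ha)).IsPrime :=
  RingHom.ker_isPrime _

lemma xx_mem_theta1 (ha : a ∈ p) : xx a ∈ RingHom.ker (theta1 a p ha) := by
  rw [RingHom.mem_ker, theta1, desc_x]

lemma yy_mem_theta2 (ha : a ∈ p) : yy a ∈ RingHom.ker (theta2 a p ha) := by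
  rw [RingHom.mem_ker, theta2, desc_y]

lemma yy_not_mem_theta1 (ha : a ∈ p) : yy a ∉ RingHom.ker (theta1 a p ha) := by
  rw [RingHom.mem_ker, theta1, desc_y]
  exact Polynomial.X_ne_zero

lemma xx_not_mem_theta2 (ha : a ∈ p) : xx a ∉ RingHom.ker (theta2 a p ha) := by
  rw [RingHom.mem_ker, theta2, desc_x]
  exact Polynomial.X_ne_zero

lemma comap_theta1 (ha : a ∈ p) : (RingHom.ker (theta1 a p ha)).comap (cc a) = p := by
  ext d
  rw [Ideal.mem_comap, RingHom.mem_ker, theta1, desc_cc, RingHom.comp_apply,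
    Polynomial.C_eq_zero, Ideal.Quotient.eq_zero_iff_mem]

lemma comap_theta2 (ha : a ∈ p) : (RingHom.ker (theta2 a p ha)).comap (cc a) = p := by
  ext d
  rw [Ideal.mem_comap, RingHom.mem_ker, theta2, desc_cc, RingHom.comp_apply,
    Polynomial.C_eq_zero, Ideal.Quotient.eq_zero_iff_mem]

lemma theta1_ker_le (ha : a ∈ p) :
    RingHom.ker (theta1 a p ha) ≤ p.map (cc a) ⊔ Ideal.span {xx a} := by
  intro F hF
  rw [RingHom.mem_ker] at hF
  obtain ⟨P, Q, rfl⟩ := nf_exists a F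
  rw [theta1, desc_nf, Polynomial.eval₂_at_zero, ← Polynomial.eval₂_map,
    Polynomial.eval₂_C_X, RingHom.comp_apply] at hF
  have h0 : P.coeff 0 ∈ p := by
    have := congrArg (fun W => Polynomial.coeff W 0) hF
    simpa using Ideal.Quotient.eq_zero_iff_mem.mp (by simpa using this)
  have hQ : ∀ n, Q.coeff n ∈ p := by
    intro n
    have := congrArg (fun W => Polynomial.coeff W (n + 1)) hF
    simp only [Polynomial.coeff_add, Polynomial.coeff_C, Polynomial.coeff_X_mul,
      Polynomial.coeff_zero, Nat.succ_ne_zero, if_false, zero_add] at this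
    rw [Polynomial.coeff_map] at this
    exact Ideal.Quotient.eq_zero_iff_mem.mp this
  rw [nf, eval₂_divX (cc a) (xx a) P]
  refine add_mem (add_mem ?_ ?_) ?_
  · exact Ideal.mem_sup_right (Ideal.mem_span_singleton'.mpr
      ⟨Polynomial.eval₂ (cc a) (xx a) P.divX, mul_comm _ _⟩)
  · exact Ideal.mem_sup_left (Ideal.mem_map_of_mem _ h0)
  · exact Ideal.mem_sup_left (Ideal.mul_mem_left _ _ (eval₂_mem_map a p hQ _))

lemma theta2_ker_le (ha : a ∈ p) :
    RingHom.ker (theta2 a p ha) ≤ p.map (cc a) ⊔ Ideal.span {yy a} := by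
  intro F hF
  rw [RingHom.mem_ker] at hF
  obtain ⟨P, Q, rfl⟩ := nf_exists a F
  rw [theta2, desc_nf, zero_mul, add_zero, ← Polynomial.eval₂_map,
    Polynomial.eval₂_C_X] at hF
  have hP : ∀ n, P.coeff n ∈ p := by
    intro n
    have := congrArg (fun W => Polynomial.coeff W n) hF
    simp only [Polynomial.coeff_map, Polynomial.coeff_zero] at this
    exact Ideal.Quotient.eq_zero_iff_mem.mp this
  rw [nf]
  refine add_mem ?_ ?_
  · exact Ideal.mem_sup_left (eval₂_mem_map a p hP _)
  · exact Ideal.mem_sup_right (Ideal.mem_span_singleton'.mpr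
      ⟨Polynomial.eval₂ (cc a) (yy a) Q, mul_comm _ _⟩)

end Theta

section Minimality

variable {D : Type*} [CommRing D] {a : D} {p : Ideal D}

lemma mem_minimalPrimes_helper (hp : p ∈ minimalPrimes D) (ha : a ∈ p) (t s : GWA D a)
    (hts : t * s = cc a a) (K : Ideal (GWA D a)) (hKp : K.IsPrime)
    (hcomap : K.comap (cc a) = p) (hle : K ≤ p.map (cc a) ⊔ Ideal.span {t}) (hs : s ∉ K) :
    K ∈ minimalPrimes (GWA D a) := by
  refine ⟨⟨hKp, bot_le⟩, ?_⟩
  rintro Q ⟨hQp, -⟩ hQK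
  have hQcomap : Q.comap (cc a) ≤ p := hcomap ▸ Ideal.comap_mono hQK
  haveI := hQp
  haveI : (Q.comap (cc a)).IsPrime := Ideal.IsPrime.comap _
  obtain ⟨q', hq', hq'le⟩ := Ideal.exists_minimalPrimes_le (I := ⊥) (J := Q.comap (cc a)) bot_le
  have hp' : Minimal (fun q : Ideal D => q.IsPrime ∧ ⊥ ≤ q) p := hp
  have hpq' : p ≤ q' := hp'.le_of_le ⟨hq'.1.1, bot_le⟩ (hq'le.trans hQcomap)
  have hpQ : p ≤ Q.comap (cc a) := hpq'.trans hq'le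
  have haQ : t * s ∈ Q := by rw [hts]; exact hpQ ha
  rcases hQp.mem_or_mem haQ with ht | hs'
  · refine hle.trans (sup_le (Ideal.map_le_iff_le_comap.mpr hpQ) ?_)
    rw [Ideal.span_le, Set.singleton_subset_iff]
    exact ht
  · exact absurd (hQK hs') hs

lemma theta1_ker_mem_minimalPrimes (hp : p ∈ minimalPrimes D) (ha : a ∈ p) :
    haveI := hp.1.1
    RingHom.ker (theta1 a p ha) ∈ minimalPrimes (GWA D a) := by
  haveI := hp.1.1
  exact mem_minimalPrimes_helper hp ha (xx a) (yy a) (x_mul_y a) _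
    (theta1_ker_isPrime ha) (comap_theta1 ha) (theta1_ker_le ha) (yy_not_mem_theta1 ha)

lemma theta2_ker_mem_minimalPrimes (hp : p ∈ minimalPrimes D) (ha : a ∈ p) :
    haveI := hp.1.1
    RingHom.ker (theta2 a p ha) ∈ minimalPrimes (GWA D a) := by
  haveI := hp.1.1
  exact mem_minimalPrimes_helper hp ha (yy a) (xx a) (by rw [mul_comm]; exact x_mul_y a) _
    (theta2_ker_isPrime ha) (comap_theta2 ha) (theta2_ker_le ha) (xx_not_mem_theta2 ha)

end Minimality

end GWA

/-- For a commutative Noetherian ring `D` and `A = D[X,Y]/(XY - a)`, the number of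
minimal primes of `A` is at least the number of minimal primes of `D`, with equality
iff `a` lies in no minimal prime of `D`. -/
theorem gwa_card_minimalPrimes (D : Type*) [CommRing D] [IsNoetherianRing D] (a : D) :
    (minimalPrimes D).ncard ≤ (minimalPrimes (GWA D a)).ncard ∧
    ((minimalPrimes (GWA D a)).ncard = (minimalPrimes D).ncard ↔
      ∀ p ∈ minimalPrimes D, a ∉ p) := by
  open GWA in
  classical
  have hfinA : (minimalPrimes (GWA D a)).Finite := minimalPrimes.finite_of_isNoetherianRing _
  have hfinD : (minimalPrimes D).Finite := minimalPrimes.finite_of_isNoetherianRing _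
  have hsurj : ∀ p ∈ minimalPrimes D, ∃ P ∈ minimalPrimes (GWA D a), P.comap (cc a) = p := by
    intro p hp
    have hker : (⊥ : Ideal (GWA D a)).comap (cc a) = ⊥ := by
      rw [← RingHom.ker_eq_comap_bot]
      exact (RingHom.injective_iff_ker_eq_bot _).mp (cc_injective a)
    have hp' : p ∈ ((⊥ : Ideal (GWA D a)).comap (cc a)).minimalPrimes := by
      rw [hker]; exact hp
    obtain ⟨P, hP, hPc⟩ := Ideal.exists_minimalPrimes_comap_eq _ p hp'
    exact ⟨P, hP, hPc⟩
  choose! Ψ hΨmem hΨcomap using hsurj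
  have h1 : (minimalPrimes D).ncard ≤ (minimalPrimes (GWA D a)).ncard :=
    Set.ncard_le_ncard_of_injOn Ψ hΨmem
      (fun p hp q hq h => by rw [← hΨcomap p hp, ← hΨcomap q hq, h]) hfinA
  refine ⟨h1, ?_, ?_⟩
  · -- equality → no minimal prime contains a
    intro heq p₀ hp₀ ha
    haveI := hp₀.1.1
    set P₁ := RingHom.ker (theta1 a p₀ ha) with hP₁def
    set P₂ := RingHom.ker (theta2 a p₀ ha) with hP₂def
    have hP₁ : P₁ ∈ minimalPrimes (GWA D a) := theta1_ker_mem_minimalPrimes hp₀ ha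
    have hP₂ : P₂ ∈ minimalPrimes (GWA D a) := theta2_ker_mem_minimalPrimes hp₀ ha
    have hne : P₂ ≠ P₁ := fun h =>
      xx_not_mem_theta2 ha (h ▸ xx_mem_theta1 ha : xx a ∈ P₂)
    set Φ : Ideal D → Ideal (GWA D a) := fun p => if p = p₀ then P₂ else Ψ p with hΦdef
    have hΦcomap : ∀ p ∈ minimalPrimes D, (Φ p).comap (cc a) = p := by
      intro p hp
      by_cases h : p = p₀
      · subst h; simp only [hΦdef, if_pos rfl]; exact comap_theta2 ha
      · simp only [hΦdef, if_neg h]; exact hΨcomap p hp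
    have hΦmem : ∀ p ∈ minimalPrimes D, Φ p ∈ minimalPrimes (GWA D a) \ {P₁} := by
      intro p hp
      refine ⟨?_, ?_⟩
      · by_cases h : p = p₀
        · subst h; simp only [hΦdef, if_pos rfl]; exact hP₂
        · simp only [hΦdef, if_neg h]; exact hΨmem p hp
      · simp only [Set.mem_singleton_iff]
        by_cases h : p = p₀
        · subst h; simp only [hΦdef, if_pos rfl]; exact hne
        · simp only [hΦdef, if_neg h]
          intro hESP
          apply h
          rw [← hΨcomap p hp, hESP, hP₁def, comap_theta1 ha]
    have h2 : (minimalPrimes D).ncard ≤ (minimalPrimes (GWA D a) \ {P₁}).ncard :=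
      Set.ncard_le_ncard_of_injOn Φ hΦmem
        (fun p hp q hq h => by rw [← hΦcomap p hp, ← hΦcomap q hq, h])
        (hfinA.diff)
    have h3 : (minimalPrimes (GWA D a) \ {P₁}).ncard < (minimalPrimes (GWA D a)).ncard :=
      Set.ncard_diff_singleton_lt_of_mem hP₁ hfinA
    omega
  · -- no minimal prime contains a → equality
    intro hall
    refine le_antisymm ?_ h1
    have key : ∀ P ∈ minimalPrimes (GWA D a),
        P.comap (cc a) ∈ minimalPrimes D ∧ P = (P.comap (cc a)).map (cc a) := by
      intro P hP
      haveI := hP.1.1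
      haveI : (P.comap (cc a)).IsPrime := Ideal.IsPrime.comap _
      obtain ⟨q, hq, hqle⟩ := Ideal.exists_minimalPrimes_le (I := ⊥)
        (J := P.comap (cc a)) bot_le
      haveI := hq.1.1
      have haq : a ∉ q := hall q hq
      have hmaple : q.map (cc a) ≤ P := Ideal.map_le_iff_le_comap.mpr hqle
      have hprime : (q.map (cc a)).IsPrime := map_cc_isPrime a q haq
      have hP' : Minimal (fun K : Ideal (GWA D a) => K.IsPrime ∧ ⊥ ≤ K) P := hP
      have hPle : P ≤ q.map (cc a) := hP'.le_of_le ⟨hprime, bot_le⟩ hmaple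
      have hPeq : P = q.map (cc a) := le_antisymm hPle hmaple
      have hcomap : P.comap (cc a) = q := by rw [hPeq, comap_map_cc a q haq]
      refine ⟨?_, ?_⟩
      · rw [hcomap]; exact hq
      · rw [hcomap, ← hPeq]
    exact Set.ncard_le_ncard_of_injOn (fun P => P.comap (cc a))
      (fun P hP => (key P hP).1)
      (fun P hP Q hQ h => by
        have h' : Ideal.comap (cc a) P = Ideal.comap (cc a) Q := h
        rw [(key P hP).2, (key Q hQ).2, h']) hfinD
end

section
/- Let D be a commutative Noetherian ring, a ∈ D, p a minimal prime of D with a ∈ p, and A = D[X,Y]/(XY - a). Then pA = (p, X) ∩ (p, Y), so pA is a semiprime (radical) ideal of A. -/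
open MvPolynomial

section Aux
variable {k : Type*} [CommRing k] [IsDomain k]

lemma gwa_prime_X0 : Prime (X 0 : MvPolynomial (Fin 2) k) := by
  rw [← MulEquiv.prime_iff (finSuccEquiv k 1).toRingEquiv.toMulEquiv]
  simpa [finSuccEquiv_X_zero] using
    (Polynomial.prime_X : Prime (Polynomial.X : Polynomial (MvPolynomial (Fin 1) k)))

lemma gwa_prime_X1 : Prime (X 1 : MvPolynomial (Fin 2) k) := by
  rw [← MulEquiv.prime_iff (renameEquiv k (Equiv.swap (0 : Fin 2) 1)).toRingEquiv.toMulEquiv]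
  simpa [renameEquiv, Equiv.swap_apply_right] using (gwa_prime_X0 (k := k))

lemma gwa_not_dvd : ¬ ((X 1 : MvPolynomial (Fin 2) k) ∣ X 0) := by
  intro h
  have h2 := map_dvd (aeval (R := k) (fun i : Fin 2 => if i = 0 then (1:k) else 0)) h
  simp only [aeval_X, if_pos, if_neg (by norm_num : (1 : Fin 2) ≠ 0)] at h2
  norm_num at h2

lemma gwa_span_inf :
    (Ideal.span {X 0} ⊓ Ideal.span {X 1} : Ideal (MvPolynomial (Fin 2) k)) =
      Ideal.span {X 0 * X 1} := by
  ext f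
  simp only [Ideal.mem_inf, Ideal.mem_span_singleton]
  constructor
  · rintro ⟨⟨g, rfl⟩, h1⟩
    rcases (gwa_prime_X1.2.2 _ _ h1) with h | ⟨h', rfl⟩
    · exact absurd h gwa_not_dvd
    · exact ⟨h', by ring⟩
  · rintro ⟨g, rfl⟩
    exact ⟨⟨X 1 * g, by ring⟩, ⟨X 0 * g, by ring⟩⟩

end Aux

/-- If `p` is a minimal prime of the commutative Noetherian ring `D` with `a ∈ p`, then
in `A = D[X,Y]/(XY - a)` we have `pA = (p, X) ∩ (p, Y)`; in particular, `pA` is a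
semiprime (radical) ideal of `A`. -/
theorem gwa_map_eq_inf (D : Type*) [CommRing D] [IsNoetherianRing D] (a : D)
    (p : Ideal D) (hp : p ∈ minimalPrimes D) (ha : a ∈ p) :
    p.map (algebraMap D (GWA D a)) =
      Ideal.span (algebraMap D (GWA D a) '' ↑p ∪ {gwaX D a}) ⊓
      Ideal.span (algebraMap D (GWA D a) '' ↑p ∪ {gwaY D a}) ∧
    (p.map (algebraMap D (GWA D a))).IsRadical := by
  haveI hpp : p.IsPrime := hp.1.1
  set R := MvPolynomial (Fin 2) D with hR
  set I : Ideal R := Ideal.span {X 0 * X 1 - C a} with hI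
  set mk : R →+* GWA D a := Ideal.Quotient.mk I with hmkdef
  have hmk : Function.Surjective mk := Ideal.Quotient.mk_surjective
  set φ : R →+* MvPolynomial (Fin 2) (D ⧸ p) :=
    MvPolynomial.map (Ideal.Quotient.mk p) with hφdef
  have hφ : Function.Surjective φ := map_surjective _ Ideal.Quotient.mk_surjective
  have hkerφ : RingHom.ker φ = p.map (C : D →+* R) := by
    rw [hφdef, MvPolynomial.ker_map, Ideal.mk_ker]
  set P1 : Ideal R := p.map (C : D →+* R) ⊔ Ideal.span {X 0} with hP1
  set P2 : Ideal R := p.map (C : D →+* R) ⊔ Ideal.span {X 1} with hP2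
  have hCa : (C a : R) ∈ p.map (C : D →+* R) := Ideal.mem_map_of_mem _ ha
  have hIP1 : I ≤ P1 := by
    rw [hI, Ideal.span_le, Set.singleton_subset_iff]
    exact sub_mem (Ideal.mem_sup_right
      (Ideal.mul_mem_right _ _ (Ideal.mem_span_singleton_self _)))
      (Ideal.mem_sup_left hCa)
  have hIP2 : I ≤ P2 := by
    rw [hI, Ideal.span_le, Set.singleton_subset_iff]
    have : (X 0 * X 1 : R) ∈ Ideal.span {X 1} :=
      Ideal.mul_mem_left _ _ (Ideal.mem_span_singleton_self _)
    exact sub_mem (Ideal.mem_sup_right this) (Ideal.mem_sup_left hCa)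
  -- map φ kills p.map C
  have hmapker : Ideal.map φ (p.map (C : D →+* R)) = ⊥ := by
    rw [eq_bot_iff, Ideal.map_le_iff_le_comap, ← RingHom.ker_eq_comap_bot, hkerφ]
  have hmapP1 : Ideal.map φ P1 = Ideal.span {X 0} := by
    rw [hP1, Ideal.map_sup, hmapker, bot_sup_eq, Ideal.map_span, Set.image_singleton,
      hφdef, MvPolynomial.map_X]
  have hmapP2 : Ideal.map φ P2 = Ideal.span {X 1} := by
    rw [hP2, Ideal.map_sup, hmapker, bot_sup_eq, Ideal.map_span, Set.image_singleton,
      hφdef, MvPolynomial.map_X]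
  -- the key intersection computation upstairs
  have hQ : P1 ⊓ P2 = p.map (C : D →+* R) ⊔ I := by
    apply le_antisymm
    · intro f hf
      have h1 : φ f ∈ Ideal.span {(X 0 : MvPolynomial (Fin 2) (D ⧸ p))} := by
        rw [← hmapP1]; exact Ideal.mem_map_of_mem φ hf.1
      have h2 : φ f ∈ Ideal.span {(X 1 : MvPolynomial (Fin 2) (D ⧸ p))} := by
        rw [← hmapP2]; exact Ideal.mem_map_of_mem φ hf.2
      have h3 : φ f ∈ Ideal.span {(X 0 * X 1 : MvPolynomial (Fin 2) (D ⧸ p))} := by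
        rw [← gwa_span_inf]; exact ⟨h1, h2⟩
      obtain ⟨g, hg⟩ := Ideal.mem_span_singleton.mp h3
      obtain ⟨g', rfl⟩ := hφ g
      have h4 : f - X 0 * X 1 * g' ∈ p.map (C : D →+* R) := by
        rw [← hkerφ, RingHom.mem_ker, map_sub, hg, map_mul, map_mul, hφdef,
          MvPolynomial.map_X, MvPolynomial.map_X, sub_self]
      have : f = (X 0 * X 1 - C a) * g' + (C a * g' + (f - X 0 * X 1 * g')) := by ring
      rw [this]
      exact add_mem
        (Ideal.mem_sup_right (Ideal.mul_mem_right _ _ (Ideal.mem_span_singleton_self _)))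
        (Ideal.mem_sup_left (add_mem (Ideal.mul_mem_right _ _ hCa) h4))
    · exact sup_le (le_inf le_sup_left le_sup_left) (le_inf hIP1 hIP2)
  -- descending to the quotient
  have hmapI : Ideal.map mk I = ⊥ := by
    rw [eq_bot_iff, Ideal.map_le_iff_le_comap, ← RingHom.ker_eq_comap_bot, Ideal.mk_ker]
  have hinf : Ideal.map mk P1 ⊓ Ideal.map mk P2 = Ideal.map mk (p.map (C : D →+* R)) := by
    have e1 : Ideal.comap mk (Ideal.map mk P1) = P1 := by
      rw [Ideal.comap_map_of_surjective mk hmk, ← RingHom.ker_eq_comap_bot, Ideal.mk_ker,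
        sup_eq_left.mpr hIP1]
    have e2 : Ideal.comap mk (Ideal.map mk P2) = P2 := by
      rw [Ideal.comap_map_of_surjective mk hmk, ← RingHom.ker_eq_comap_bot, Ideal.mk_ker,
        sup_eq_left.mpr hIP2]
    rw [← Ideal.map_comap_of_surjective mk hmk (Ideal.map mk P1 ⊓ Ideal.map mk P2),
      Ideal.comap_inf, e1, e2, hQ, Ideal.map_sup, hmapI, sup_bot_eq]
  -- identify the ideals in the statement
  have halg : algebraMap D (GWA D a) = mk.comp (C : D →+* R) := by
    rw [IsScalarTower.algebraMap_eq D R (GWA D a), Ideal.Quotient.algebraMap_eq,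
      MvPolynomial.algebraMap_eq]
  have hpA : p.map (algebraMap D (GWA D a)) = Ideal.map mk (p.map (C : D →+* R)) := by
    rw [halg, ← Ideal.map_map]
  have hspan1 : Ideal.span (algebraMap D (GWA D a) '' ↑p ∪ {gwaX D a}) = Ideal.map mk P1 := by
    rw [Ideal.span_union, hP1, Ideal.map_sup, Ideal.map_span, Set.image_singleton]
    congr 1
  have hspan2 : Ideal.span (algebraMap D (GWA D a) '' ↑p ∪ {gwaY D a}) = Ideal.map mk P2 := by
    rw [Ideal.span_union, hP2, Ideal.map_sup, Ideal.map_span, Set.image_singleton]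
    congr 1
  -- primality of the two big ideals
  have hP1prime : P1.IsPrime := by
    have hx : (Ideal.span {(X 0 : MvPolynomial (Fin 2) (D ⧸ p))}).IsPrime :=
      (Ideal.span_singleton_prime (MvPolynomial.X_ne_zero 0)).mpr gwa_prime_X0
    have : P1 = Ideal.comap φ (Ideal.span {(X 0 : MvPolynomial (Fin 2) (D ⧸ p))}) := by
      rw [← hmapP1, Ideal.comap_map_of_surjective φ hφ, ← RingHom.ker_eq_comap_bot, hkerφ,
        ]
      exact (sup_eq_left.mpr (by rw [hP1]; exact le_sup_left)).symm
    rw [this]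
    exact hx.comap φ
  have hP2prime : P2.IsPrime := by
    have hx : (Ideal.span {(X 1 : MvPolynomial (Fin 2) (D ⧸ p))}).IsPrime :=
      (Ideal.span_singleton_prime (MvPolynomial.X_ne_zero 1)).mpr gwa_prime_X1
    have : P2 = Ideal.comap φ (Ideal.span {(X 1 : MvPolynomial (Fin 2) (D ⧸ p))}) := by
      rw [← hmapP2, Ideal.comap_map_of_surjective φ hφ, ← RingHom.ker_eq_comap_bot, hkerφ,
        ]
      exact (sup_eq_left.mpr (by rw [hP2]; exact le_sup_left)).symm
    rw [this]
    exact hx.comap φ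
  have hQ1 : (Ideal.map mk P1).IsPrime :=
    Ideal.map_isPrime_of_surjective hmk (by rw [Ideal.mk_ker]; exact hIP1)
  have hQ2 : (Ideal.map mk P2).IsPrime :=
    Ideal.map_isPrime_of_surjective hmk (by rw [Ideal.mk_ker]; exact hIP2)
  have hmain : p.map (algebraMap D (GWA D a)) =
      Ideal.span (algebraMap D (GWA D a) '' ↑p ∪ {gwaX D a}) ⊓
      Ideal.span (algebraMap D (GWA D a) '' ↑p ∪ {gwaY D a}) := by
    rw [hspan1, hspan2, hinf, hpA]
  refine ⟨hmain, ?_⟩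
  rw [hmain, hspan1, hspan2]
  exact hQ1.isRadical.inf hQ2.isRadical
end

section
/- Let D be a commutative ring with trivial Poisson bracket, and let ∂ be a derivation of D and a ∈ D with ∂(a) defined. On A = D[X,Y]/(XY - a), the rule {Y,d} = ∂(d)Y, {X,d} = -∂(d)X for d ∈ D, and {Y,X} = ∂(a), extends to a well-defined Poisson bracket on A (i.e., a Lie bracket satisfying the Leibniz rule) making A a Poisson algebra. -/
open MvPolynomial

section helpers
variable {D : Type*} [CommRing D] (del : Derivation ℤ D D)

noncomputable def Emap : MvPolynomial (Fin 2) D →+ MvPolynomial (Fin 2) D :=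
  AddMonoidAlgebra.coeffAddEquiv.symm.toAddMonoidHom.comp
    ((Finsupp.mapRange.addMonoidHom (del.toLinearMap.toAddMonoidHom)).comp
      AddMonoidAlgebra.coeffAddEquiv.toAddMonoidHom)

lemma coeff_Emap (m : Fin 2 →₀ ℕ) (f : MvPolynomial (Fin 2) D) :
    coeff m (Emap del f) = del (coeff m f) := rfl

lemma Emap_C (c : D) : Emap del (C c) = C (del c) := by
  ext m; simp [coeff_Emap, coeff_C, apply_ite del]

lemma Emap_X (i : Fin 2) : Emap del (X i) = 0 := by
  ext m; simp [coeff_Emap, X, coeff_monomial, apply_ite del]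

lemma Emap_mul (f g : MvPolynomial (Fin 2) D) :
    Emap del (f * g) = Emap del f * g + f * Emap del g := by
  ext m
  simp only [coeff_Emap, coeff_add, coeff_mul]
  rw [show (del (∑ x ∈ Finset.HasAntidiagonal.antidiagonal m, coeff x.1 f * coeff x.2 g) : D)
      = ∑ x ∈ Finset.HasAntidiagonal.antidiagonal m, del (coeff x.1 f * coeff x.2 g) from
      map_sum del.toLinearMap _ _, ← Finset.sum_add_distrib]
  refine Finset.sum_congr rfl fun p _ => ?_
  simp only [Derivation.leibniz, smul_eq_mul]
  ring

lemma pderiv_pderiv' (i j : Fin 2) (f : MvPolynomial (Fin 2) D) :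
    pderiv i (pderiv j f) = pderiv j (pderiv i f) := by
  induction f using MvPolynomial.induction_on with
  | C c => simp [pderiv_C]
  | add p q hp hq => simp [map_add, hp, hq]
  | mul_X p k hp =>
      simp only [pderiv_mul, map_add, pderiv_mul, hp]
      fin_cases i <;> fin_cases j <;> fin_cases k <;>
        simp [pderiv_X, pderiv_mul, hp]

lemma pderiv_Emap (i : Fin 2) (f : MvPolynomial (Fin 2) D) :
    pderiv i (Emap del f) = Emap del (pderiv i f) := by
  induction f using MvPolynomial.induction_on with
  | C c => simp [Emap_C, pderiv_C]
  | add p q hp hq => simp [map_add, hp, hq]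
  | mul_X p k hp =>
      rw [Emap_mul]
      simp only [Emap_X, mul_zero, add_zero, pderiv_mul, hp, map_add]
      rw [Emap_mul]
      fin_cases i <;> fin_cases k <;>
        simp [pderiv_X, Emap_X, Emap_C, hp, Emap_mul]

lemma pd01 (f : MvPolynomial (Fin 2) D) :
    pderiv (0 : Fin 2) (pderiv (1 : Fin 2) f) = pderiv 1 (pderiv 0 f) :=
  pderiv_pderiv' 0 1 f

lemma pX00 : pderiv (0 : Fin 2) (X (0:Fin 2) : MvPolynomial (Fin 2) D) = 1 := pderiv_X_self 0
lemma pX11 : pderiv (1 : Fin 2) (X (1:Fin 2) : MvPolynomial (Fin 2) D) = 1 := pderiv_X_self 1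
lemma pX01 : pderiv (0 : Fin 2) (X (1:Fin 2) : MvPolynomial (Fin 2) D) = 0 :=
  pderiv_X_of_ne (by decide)
lemma pX10 : pderiv (1 : Fin 2) (X (0:Fin 2) : MvPolynomial (Fin 2) D) = 0 :=
  pderiv_X_of_ne (by decide)

/-- The Poisson bracket on `D[X,Y]`. -/
noncomputable def Bp (a : D) (f g : MvPolynomial (Fin 2) D) : MvPolynomial (Fin 2) D :=
  C (del a) * (pderiv 1 f * pderiv 0 g - pderiv 0 f * pderiv 1 g)
  + Emap del f * (X 0 * pderiv 0 g - X 1 * pderiv 1 g)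
  - (X 0 * pderiv 0 f - X 1 * pderiv 1 f) * Emap del g

lemma Bp_add_left (a : D) (f g h : MvPolynomial (Fin 2) D) :
    Bp del a (f + g) h = Bp del a f h + Bp del a g h := by
  simp only [Bp, map_add]; ring

lemma Bp_add_right (a : D) (f g h : MvPolynomial (Fin 2) D) :
    Bp del a f (g + h) = Bp del a f g + Bp del a f h := by
  simp only [Bp, map_add]; ring

lemma Bp_sub_left (a : D) (f g h : MvPolynomial (Fin 2) D) :
    Bp del a (f - g) h = Bp del a f h - Bp del a g h := by
  simp only [Bp, map_sub]; ring

lemma Bp_sub_right (a : D) (f g h : MvPolynomial (Fin 2) D) :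
    Bp del a f (g - h) = Bp del a f g - Bp del a f h := by
  simp only [Bp, map_sub]; ring

lemma Bp_antisymm (a : D) (f g : MvPolynomial (Fin 2) D) :
    Bp del a f g = - Bp del a g f := by
  simp only [Bp]; ring

lemma Bp_leibniz (a : D) (f g h : MvPolynomial (Fin 2) D) :
    Bp del a f (g * h) = Bp del a f g * h + g * Bp del a f h := by
  simp only [Bp, pderiv_mul, Emap_mul]; ring

lemma Bp_rel (a : D) (f : MvPolynomial (Fin 2) D) :
    Bp del a f (X 0 * X 1 - C a) = 0 := by
  simp only [Bp, map_sub, pderiv_mul, Emap_mul, pderiv_C, Emap_C, Emap_X, pderiv_X]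
  norm_num
  ring

lemma Bp_jacobi (a : D) (f g h : MvPolynomial (Fin 2) D) :
    Bp del a f (Bp del a g h) = Bp del a (Bp del a f g) h + Bp del a g (Bp del a f h) := by
  simp only [Bp, map_sub, map_add, pderiv_mul, Emap_mul, pderiv_C, Emap_C, Emap_X,
    pX00, pX01, pX10, pX11, pderiv_Emap, pd01]
  ring

lemma Bp_C_C (a : D) (d e : D) : Bp del a (C d) (C e) = 0 := by
  simp [Bp, pderiv_C, Emap_C]

lemma Bp_Y_C (a : D) (d : D) : Bp del a (X 1) (C d) = C (del d) * X 1 := by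
  simp only [Bp, pderiv_C, Emap_C, Emap_X, pderiv_X]
  norm_num
  ring

lemma Bp_X_C (a : D) (d : D) : Bp del a (X 0) (C d) = -(C (del d) * X 0) := by
  simp only [Bp, pderiv_C, Emap_C, Emap_X, pderiv_X]
  norm_num
  ring

lemma Bp_Y_X (a : D) : Bp del a (X 1) (X 0) = C (del a) := by
  simp only [Bp, Emap_X, pderiv_X]
  norm_num

end helpers

/-- Let `D` be a commutative ring (with trivial Poisson bracket), `∂` a derivation of `D`
and `a ∈ D`. Then the rules `{Y,d} = ∂(d)Y`, `{X,d} = -∂(d)X` (for `d ∈ D`) and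
`{Y,X} = ∂(a)` extend to a well-defined Poisson bracket on `A = D[X,Y]/(XY - a)`:
a biadditive, antisymmetric bracket satisfying the Jacobi identity and the Leibniz
rule. This makes `A` a Poisson algebra (the generalized Weyl Poisson algebra
`D[X,Y; a, ∂}` of rank 1). -/
theorem gwa_poisson_bracket_exists (D : Type*) [CommRing D] (del : Derivation ℤ D D) (a : D) :
    ∃ B : GWA D a → GWA D a → GWA D a,
      (∀ u v w : GWA D a, B (u + v) w = B u w + B v w) ∧
      (∀ u v w : GWA D a, B u (v + w) = B u v + B u w) ∧
      (∀ u v : GWA D a, B u v = - B v u) ∧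
      (∀ u v w : GWA D a, B u (B v w) = B (B u v) w + B v (B u w)) ∧
      (∀ u v w : GWA D a, B u (v * w) = B u v * w + v * B u w) ∧
      (∀ d e : D, B (algebraMap D (GWA D a) d) (algebraMap D (GWA D a) e) = 0) ∧
      (∀ d : D, B (gwaY D a) (algebraMap D (GWA D a) d) =
        algebraMap D (GWA D a) (del d) * gwaY D a) ∧
      (∀ d : D, B (gwaX D a) (algebraMap D (GWA D a) d) =
        -(algebraMap D (GWA D a) (del d) * gwaX D a)) ∧
      B (gwaY D a) (gwaX D a) = algebraMap D (GWA D a) (del a) := by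
  classical
  set I : Ideal (MvPolynomial (Fin 2) D) := Ideal.span {X 0 * X 1 - C a} with hI
  -- the bracket maps the ideal into itself
  have memB : ∀ (f : MvPolynomial (Fin 2) D) {g}, g ∈ I → Bp del a f g ∈ I := by
    intro f g hg
    rw [hI, Ideal.mem_span_singleton] at hg
    obtain ⟨h, rfl⟩ := hg
    rw [Bp_leibniz, Bp_rel, zero_mul, zero_add, hI]
    exact Ideal.mul_mem_right _ _ (Ideal.mem_span_singleton_self _)
  have memB' : ∀ {f} (g : MvPolynomial (Fin 2) D), f ∈ I → Bp del a f g ∈ I := by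
    intro f g hf
    rw [Bp_antisymm]
    exact I.neg_mem (memB g hf)
  -- define the bracket on the quotient
  let B : GWA D a → GWA D a → GWA D a := fun u v =>
    Quotient.liftOn₂' u v (fun f g => Ideal.Quotient.mk I (Bp del a f g)) (by
      intro f₁ g₁ f₂ g₂ hf hg
      have hf' : f₁ - f₂ ∈ I := (Submodule.quotientRel_def I).mp hf
      have hg' : g₁ - g₂ ∈ I := (Submodule.quotientRel_def I).mp hg
      rw [Ideal.Quotient.eq]
      have : Bp del a f₁ g₁ - Bp del a f₂ g₂
          = Bp del a (f₁ - f₂) g₁ + Bp del a f₂ (g₁ - g₂) := by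
        rw [Bp_sub_left, Bp_sub_right]; ring
      rw [this]
      exact I.add_mem (memB' _ hf') (memB _ hg'))
  have hBmk : ∀ f g : MvPolynomial (Fin 2) D,
      B (Ideal.Quotient.mk I f) (Ideal.Quotient.mk I g) = Ideal.Quotient.mk I (Bp del a f g) :=
    fun f g => rfl
  have hsurj := Ideal.Quotient.mk_surjective (I := I)
  have halg : ∀ d : D, algebraMap D (GWA D a) d = Ideal.Quotient.mk I (C d) := fun d => by
    rw [← Ideal.Quotient.mk_algebraMap]; rfl
  refine ⟨B, ?_, ?_, ?_, ?_, ?_, ?_, ?_, ?_, ?_⟩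
  · intro u v w
    obtain ⟨f, rfl⟩ := hsurj u; obtain ⟨g, rfl⟩ := hsurj v; obtain ⟨h, rfl⟩ := hsurj w
    rw [← map_add, hBmk, hBmk, hBmk, Bp_add_left, map_add]
  · intro u v w
    obtain ⟨f, rfl⟩ := hsurj u; obtain ⟨g, rfl⟩ := hsurj v; obtain ⟨h, rfl⟩ := hsurj w
    rw [← map_add, hBmk, hBmk, hBmk, Bp_add_right, map_add]
  · intro u v
    obtain ⟨f, rfl⟩ := hsurj u; obtain ⟨g, rfl⟩ := hsurj v
    rw [hBmk, hBmk, Bp_antisymm, map_neg]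
  · intro u v w
    obtain ⟨f, rfl⟩ := hsurj u; obtain ⟨g, rfl⟩ := hsurj v; obtain ⟨h, rfl⟩ := hsurj w
    rw [hBmk, hBmk, hBmk, hBmk, hBmk, hBmk, Bp_jacobi, map_add]
  · intro u v w
    obtain ⟨f, rfl⟩ := hsurj u; obtain ⟨g, rfl⟩ := hsurj v; obtain ⟨h, rfl⟩ := hsurj w
    rw [← map_mul, hBmk, hBmk, hBmk, Bp_leibniz, map_add, map_mul, map_mul]
  · intro d e
    rw [halg, halg, hBmk, Bp_C_C, map_zero]
  · intro d
    rw [halg, halg, gwaY, hBmk, Bp_Y_C, map_mul]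
  · intro d
    rw [halg, halg, gwaX, hBmk, Bp_X_C, map_neg, map_mul]
  · rw [halg, gwaY, gwaX, hBmk, Bp_Y_X]
end
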